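/- arXiv:2012.14001 — 9 statements merged into one kernel-verified Lean document; each statement's English description precedes it below -/
import Mathlib

section
/- Let V_1, …, V_k be complex n × m matrices with Σ_{r=1}^k V_rᴴ * V_r = 1_m, and let Φ : Matrix n n ℂ → Matrix m m ℂ be Φ(a) = Σ_r V_rᴴ * a * V_r, with trace-dual Φ*(b) = Σ_r V_r * b * V_rᴴ. Let ρ_B ∈ Matrix m m ℂ be positive definite with Tr ρ_B = 1 and suppose ρ_A := Φ*(ρ_B) is positive definite. Then the Petz dual map Φ^P(b) := ρ_A^{-1/2} * Φ*(ρ_B^{1/2} * b * ρ_B^{1/2}) * ρ_A^{-1/2} is unital (Φ^P(1_m) = 1_n), completely positive, and is the unique linear map from Matrix m m ℂ to Matrix n n ℂ satisfying the alternate-inner-product duality Tr(ρ_B^{1/2} * b * ρ_B^{1/2} * Φ(a)) = Tr(ρ_A^{1/2} * Φ^P(b) * ρ_A^{1/2} * a) for all a ∈ Matrix n n ℂ and b ∈ Matrix m m ℂ. -/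
open Matrix
open scoped ComplexOrder

/-- A linear map between complex matrix algebras is completely positive if for every `k ≥ 1`
its blockwise application to `k × k` block matrices sends positive semidefinite matrices to
positive semidefinite matrices. -/
def IsCP {n m : Type*} [Fintype n] [Fintype m]
    (Φ : Matrix n n ℂ → Matrix m m ℂ) : Prop :=
  ∀ (k : ℕ) (M : Matrix (n × Fin k) (n × Fin k) ℂ), M.PosSemidef →
    (Matrix.of fun p q : m × Fin k =>
      Φ (Matrix.of fun i j => M (i, p.2) (j, q.2)) p.1 q.1).PosSemidef

/-- The positive semidefinite square root of a positive semidefinite matrix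
(the definition `Matrix.PosSemidef.sqrt` of the older Mathlib, since removed). -/
noncomputable def Matrix.PosSemidef.sqrt {n : Type*} [Fintype n] [DecidableEq n]
    {𝕜 : Type*} [RCLike 𝕜] {A : Matrix n n 𝕜} (hA : A.PosSemidef) : Matrix n n 𝕜 :=
  hA.1.eigenvectorUnitary.1 * diagonal ((↑) ∘ (√·) ∘ hA.1.eigenvalues) *
  (star hA.1.eigenvectorUnitary : Matrix n n 𝕜)

lemma psdSqrt_mul_self {N : Type*} [Fintype N] [DecidableEq N] {A : Matrix N N ℂ}
    (hA : A.PosSemidef) : hA.sqrt * hA.sqrt = A := by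
  have hU : (star hA.1.eigenvectorUnitary : Matrix N N ℂ) * hA.1.eigenvectorUnitary.1 = 1 :=
    Unitary.star_mul_self_of_mem hA.1.eigenvectorUnitary.2
  conv_rhs => rw [hA.1.spectral_theorem, Unitary.conjStarAlgAut_apply]
  unfold Matrix.PosSemidef.sqrt
  rw [show ∀ X Y Z W : Matrix N N ℂ, X * Y * Z * (X * W * Z) = X * Y * (Z * X) * W * Z from
    fun X Y Z W => by simp only [Matrix.mul_assoc], hU, Matrix.mul_one]
  congr 1
  rw [Matrix.mul_assoc, diagonal_mul_diagonal]
  congr 2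
  funext i
  simp only [Function.comp_apply]
  rw [← RCLike.ofReal_mul, Real.mul_self_sqrt (hA.eigenvalues_nonneg i)]

lemma psdSqrt_isHermitian {N : Type*} [Fintype N] [DecidableEq N] {A : Matrix N N ℂ}
    (hA : A.PosSemidef) : (hA.sqrt)ᴴ = hA.sqrt := by
  unfold Matrix.PosSemidef.sqrt
  rw [Matrix.conjTranspose_mul, Matrix.conjTranspose_mul, diagonal_conjTranspose]
  simp only [Matrix.star_eq_conjTranspose, conjTranspose_conjTranspose, Matrix.mul_assoc]
  congr 3
  funext i
  simp

/-- Trace against all matrices determines a matrix. -/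
lemma trace_faithful {n : ℕ} (X Y : Matrix (Fin n) (Fin n) ℂ)
    (h : ∀ a, (X * a).trace = (Y * a).trace) : X = Y := by
  ext i j
  have := h (single j i 1)
  simpa [Matrix.trace, Matrix.diag, Matrix.mul_apply, Matrix.single, ite_and,
    Finset.sum_ite_eq, Finset.sum_ite_eq'] using this

lemma sum_psd {α : Type*} {N : Type*} [Fintype N] [DecidableEq N]
    (s : Finset α) (f : α → Matrix N N ℂ)
    (h : ∀ a ∈ s, (f a).PosSemidef) : (∑ a ∈ s, f a).PosSemidef := by
  classical
  induction s using Finset.induction with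
  | empty => simpa using Matrix.PosSemidef.zero
  | insert _ _ hx ih =>
    rw [Finset.sum_insert hx]
    exact ((h _ (Finset.mem_insert_self _ _)).add
      (ih fun a ha => h a (Finset.mem_insert_of_mem ha)))

/-- The Petz dual map is unital, completely positive, and is the unique linear map
satisfying the alternate-inner-product duality with the error map. -/
theorem petz_dual_unital_CP_unique
    {n m k : ℕ} (V : Fin k → Matrix (Fin n) (Fin m) ℂ)
    (hV : ∑ r, (V r)ᴴ * V r = 1)
    (ρB : Matrix (Fin m) (Fin m) ℂ) (hρB : ρB.PosDef) (hρBtr : ρB.trace = 1)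
    (hρA : (∑ r, V r * ρB * (V r)ᴴ).PosDef) :
    let sB := hρB.posSemidef.sqrt
    let sA := hρA.posSemidef.sqrt
    let ΦP : Matrix (Fin m) (Fin m) ℂ → Matrix (Fin n) (Fin n) ℂ :=
      fun b => sA⁻¹ * (∑ r, V r * (sB * b * sB) * (V r)ᴴ) * sA⁻¹
    ΦP 1 = 1 ∧ IsCP ΦP ∧
    (∀ (a : Matrix (Fin n) (Fin n) ℂ) (b : Matrix (Fin m) (Fin m) ℂ),
      (sB * b * sB * (∑ r, (V r)ᴴ * a * V r)).trace = (sA * ΦP b * sA * a).trace) ∧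
    (∀ Ψ : Matrix (Fin m) (Fin m) ℂ →ₗ[ℂ] Matrix (Fin n) (Fin n) ℂ,
      (∀ (a : Matrix (Fin n) (Fin n) ℂ) (b : Matrix (Fin m) (Fin m) ℂ),
        (sB * b * sB * (∑ r, (V r)ᴴ * a * V r)).trace = (sA * Ψ b * sA * a).trace) →
      ∀ b, Ψ b = ΦP b) := by
  intro sB sA ΦP
  -- basic facts
  have hsB2 : sB * sB = ρB := psdSqrt_mul_self hρB.posSemidef
  have hsA2 : sA * sA = ∑ r, V r * ρB * (V r)ᴴ := psdSqrt_mul_self hρA.posSemidef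
  have hsAdet : IsUnit sA.det := by
    have h2 : sA.det * sA.det = (∑ r, V r * ρB * (V r)ᴴ).det := by
      rw [← Matrix.det_mul, hsA2]
    have hne : (∑ r, V r * ρB * (V r)ᴴ).det ≠ 0 := hρA.det_pos.ne'
    refine isUnit_iff_ne_zero.mpr fun h => hne ?_
    rw [← h2, h, mul_zero]
  have hsAinv : sA * sA⁻¹ = 1 := Matrix.mul_nonsing_inv sA hsAdet
  have hsAinv' : sA⁻¹ * sA = 1 := Matrix.nonsing_inv_mul sA hsAdet
  have hsBH : sBᴴ = sB := psdSqrt_isHermitian hρB.posSemidef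
  have hsAH : sAᴴ = sA := psdSqrt_isHermitian hρA.posSemidef
  have hsAiH : (sA⁻¹)ᴴ = sA⁻¹ := by
    rw [Matrix.conjTranspose_nonsing_inv, hsAH]
  -- Kraus form of ΦP
  have hΦP : ∀ b, ΦP b = ∑ r, (sA⁻¹ * V r * sB) * b * (sA⁻¹ * V r * sB)ᴴ := by
    intro b
    show sA⁻¹ * (∑ r, V r * (sB * b * sB) * (V r)ᴴ) * sA⁻¹ = _
    rw [Finset.mul_sum, Finset.sum_mul]
    refine Finset.sum_congr rfl fun r _ => ?_
    simp only [Matrix.conjTranspose_mul, hsBH, hsAiH]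
    simp only [Matrix.mul_assoc]
  -- unitality
  have hunital : ΦP 1 = 1 := by
    show sA⁻¹ * (∑ r, V r * (sB * 1 * sB) * (V r)ᴴ) * sA⁻¹ = 1
    simp only [Matrix.mul_one, hsB2]
    rw [← hsA2]
    rw [show sA⁻¹ * (sA * sA) * sA⁻¹ = (sA⁻¹ * sA) * (sA * sA⁻¹) by noncomm_ring,
      hsAinv, hsAinv', one_mul]
  refine ⟨hunital, ?_, ?_, ?_⟩
  · -- complete positivity
    intro k' M hM
    have key : (Matrix.of fun p q : Fin n × Fin k' =>
        ΦP (Matrix.of fun i j => M (i, p.2) (j, q.2)) p.1 q.1)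
        = ∑ r, (Matrix.of fun (p : Fin n × Fin k') (q : Fin m × Fin k') =>
            (sA⁻¹ * V r * sB) p.1 q.1 * (if p.2 = q.2 then 1 else 0)) * M *
          (Matrix.of fun (p : Fin n × Fin k') (q : Fin m × Fin k') =>
            (sA⁻¹ * V r * sB) p.1 q.1 * (if p.2 = q.2 then 1 else 0))ᴴ := by
      ext p q
      rw [Matrix.of_apply, hΦP, Matrix.sum_apply, Matrix.sum_apply]
      refine Finset.sum_congr rfl fun r _ => ?_
      simp only [Matrix.mul_apply, Matrix.conjTranspose_apply, Matrix.of_apply,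
        Fintype.sum_prod_type, apply_ite star, star_mul', star_zero, star_one,
        mul_ite, ite_mul, mul_zero, zero_mul, mul_one, one_mul,
        Finset.sum_ite_eq, Finset.sum_ite_eq', Finset.mem_univ, if_true]
    rw [key]
    apply sum_psd
    intro r _
    exact hM.mul_mul_conjTranspose_same _
  · -- duality
    intro a b
    have hmid : sA * ΦP b * sA = ∑ r, V r * (sB * b * sB) * (V r)ᴴ := by
      show sA * (sA⁻¹ * (∑ r, V r * (sB * b * sB) * (V r)ᴴ) * sA⁻¹) * sA = _
      rw [show ∀ X : Matrix (Fin n) (Fin n) ℂ, sA * (sA⁻¹ * X * sA⁻¹) * sA =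
        (sA * sA⁻¹) * X * (sA⁻¹ * sA) from fun X => by noncomm_ring, hsAinv, hsAinv',
        one_mul, mul_one]
    rw [hmid, Finset.mul_sum, Finset.sum_mul, Matrix.trace_sum, Matrix.trace_sum]
    refine Finset.sum_congr rfl fun r _ => ?_
    rw [show sB * b * sB * ((V r)ᴴ * a * V r) = (sB * b * sB * ((V r)ᴴ * a)) * V r by
      simp only [Matrix.mul_assoc], Matrix.trace_mul_comm]
    simp only [Matrix.mul_assoc]
  · -- uniqueness
    intro Ψ hΨ b
    have hdual : ∀ a : Matrix (Fin n) (Fin n) ℂ, (sB * b * sB * (∑ r, (V r)ᴴ * a * V r)).trace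
        = (sA * ΦP b * sA * a).trace := by
      intro a
      have hmid : sA * ΦP b * sA = ∑ r, V r * (sB * b * sB) * (V r)ᴴ := by
        show sA * (sA⁻¹ * (∑ r, V r * (sB * b * sB) * (V r)ᴴ) * sA⁻¹) * sA = _
        rw [show ∀ X : Matrix (Fin n) (Fin n) ℂ, sA * (sA⁻¹ * X * sA⁻¹) * sA =
          (sA * sA⁻¹) * X * (sA⁻¹ * sA) from fun X => by noncomm_ring, hsAinv, hsAinv',
          one_mul, mul_one]
      rw [hmid, Finset.mul_sum, Finset.sum_mul, Matrix.trace_sum, Matrix.trace_sum]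
      refine Finset.sum_congr rfl fun r _ => ?_
      rw [show sB * b * sB * ((V r)ᴴ * a * V r) = (sB * b * sB * ((V r)ᴴ * a)) * V r by
        simp only [Matrix.mul_assoc], Matrix.trace_mul_comm]
      simp only [Matrix.mul_assoc]
    have heq : sA * Ψ b * sA = sA * ΦP b * sA := by
      apply trace_faithful
      intro a
      rw [← hΨ a b, hdual a]
    have := congrArg (fun X => sA⁻¹ * X * sA⁻¹) heq
    simpa only [show ∀ X : Matrix (Fin n) (Fin n) ℂ, sA⁻¹ * (sA * X * sA) * sA⁻¹ =
      (sA⁻¹ * sA) * X * (sA * sA⁻¹) from fun X => by noncomm_ring, hsAinv, hsAinv',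
      one_mul, mul_one] using this
end

section
/- For every unital star-subalgebra S of Matrix n n ℂ there exists a unique trace-preserving conditional expectation E from Matrix n n ℂ onto S, i.e. a unique conditional expectation onto S satisfying Tr(E(a)) = Tr(a) for all a ∈ Matrix n n ℂ. -/
open Matrix
open scoped ComplexOrder

/-- A conditional expectation onto a unital star-subalgebra `S` (given by its carrier set)
is a unital completely positive linear map with range inside `S`, fixing every element of
`S`, and satisfying the `S`-bimodule property. -/
def IsCondExpOn {d : Type*} [Fintype d] [DecidableEq d] (S : Set (Matrix d d ℂ))
    (E : Matrix d d ℂ → Matrix d d ℂ) : Prop :=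
  (∀ x y, E (x + y) = E x + E y) ∧
  (∀ (z : ℂ) (x : Matrix d d ℂ), E (z • x) = z • E x) ∧
  E 1 = 1 ∧
  IsCP E ∧
  (∀ x, E x ∈ S) ∧
  (∀ c ∈ S, E c = c) ∧
  (∀ c₁ ∈ S, ∀ c₂ ∈ S, ∀ x, E (c₁ * x * c₂) = c₁ * E x * c₂)

set_option linter.unusedSectionVars false
section Aux
open Polynomial

variable {d : Type*} [Fintype d] [DecidableEq d]

noncomputable def eL : Matrix d d ℂ ≃ₗ[ℂ] EuclideanSpace ℂ (d × d) where
  toFun M := WithLp.toLp 2 (fun p : d × d => M p.1 p.2)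
  invFun v := Matrix.of fun i j => v (i, j)
  map_add' _ _ := rfl
  map_smul' _ _ := rfl
  left_inv _ := rfl
  right_inv _ := rfl

lemma inner_eL (a b : Matrix d d ℂ) :
    (inner ℂ (eL a) (eL b) : ℂ) = (aᴴ * b).trace := by
  simp only [PiLp.inner_apply, RCLike.inner_apply, Matrix.trace, Matrix.diag,
    Matrix.mul_apply, Matrix.conjTranspose_apply, eL, LinearEquiv.coe_mk]
  rw [Fintype.sum_prod_type, Finset.sum_comm]
  exact Finset.sum_congr rfl fun _ _ => Finset.sum_congr rfl fun _ _ => mul_comm _ _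

variable (T : StarSubalgebra ℂ (Matrix d d ℂ))

noncomputable def subK : Submodule ℂ (EuclideanSpace ℂ (d × d)) :=
  (Subalgebra.toSubmodule T.toSubalgebra).map (eL (d := d)).toLinearMap

noncomputable def projT (x : Matrix d d ℂ) : Matrix d d ℂ :=
  eL.symm ((subK T).starProjection (eL x))

lemma projT_mem (x : Matrix d d ℂ) : projT T x ∈ T := by
  have h := ((subK T).orthogonalProjectionOnto (eL x)).2
  rcases h with ⟨y, hy, hxy⟩
  have : projT T x = y := by
    apply eL.injective
    simp only [projT, LinearEquiv.apply_symm_apply]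
    exact hxy.symm
  rw [this]; exact hy

lemma projT_orth (x : Matrix d d ℂ) : ∀ t ∈ T, (tᴴ * (x - projT T x)).trace = 0 := by
  intro t ht
  have h := Submodule.sub_starProjection_mem_orthogonal (K := subK T) (eL x)
  have ht' : eL t ∈ subK T := ⟨t, ht, rfl⟩
  have := (Submodule.mem_orthogonal _ _).1 h (eL t) ht'
  rw [← inner_eL, map_sub]
  simpa [projT, inner_sub_right] using this

lemma projT_eq_of {x z : Matrix d d ℂ} (hz : z ∈ T)
    (h : ∀ t ∈ T, (tᴴ * (x - z)).trace = 0) : projT T x = z := by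
  have hz' : eL z ∈ subK T := ⟨z, hz, rfl⟩
  have horth : eL x - eL z ∈ (subK T)ᗮ := by
    rw [Submodule.mem_orthogonal]
    rintro u ⟨t, ht, rfl⟩
    simp only [LinearEquiv.coe_coe]
    rw [← map_sub, inner_eL]
    exact h t ht
  have := Submodule.eq_starProjection_of_mem_orthogonal (K := subK T) hz' horth
  apply eL.injective
  simp [projT, this]

lemma projT_add (x y : Matrix d d ℂ) : projT T (x + y) = projT T x + projT T y := by
  simp [projT, map_add]

lemma projT_smul (z : ℂ) (x : Matrix d d ℂ) : projT T (z • x) = z • projT T x := by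
  simp [projT, _root_.map_smul]

lemma projT_fix {c : Matrix d d ℂ} (hc : c ∈ T) : projT T c = c :=
  projT_eq_of T hc (by simp)

lemma projT_one : projT T 1 = 1 := projT_fix T T.one_mem

lemma projT_trace (x : Matrix d d ℂ) : (projT T x).trace = x.trace := by
  have := projT_orth T x 1 T.one_mem
  simp only [conjTranspose_one, one_mul] at this
  rw [Matrix.trace_sub] at this
  linear_combination -this

lemma projT_bimod {c₁ c₂ : Matrix d d ℂ} (hc₁ : c₁ ∈ T) (hc₂ : c₂ ∈ T) (x : Matrix d d ℂ) :
    projT T (c₁ * x * c₂) = c₁ * projT T x * c₂ := by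
  apply projT_eq_of T (mul_mem (mul_mem hc₁ (projT_mem T x)) hc₂)
  intro t ht
  have h2 := projT_orth T x (c₁ᴴ * t * c₂ᴴ) (mul_mem (mul_mem (star_mem hc₁) ht) (star_mem hc₂))
  have e1 : tᴴ * (c₁ * x * c₂ - c₁ * projT T x * c₂) = (tᴴ * c₁ * (x - projT T x)) * c₂ := by
    noncomm_ring
  rw [e1, Matrix.trace_mul_comm]
  have e2 : c₂ * (tᴴ * c₁ * (x - projT T x)) = (c₁ᴴ * t * c₂ᴴ)ᴴ * (x - projT T x) := by
    simp only [conjTranspose_mul, conjTranspose_conjTranspose]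
    noncomm_ring
  rw [e2]
  exact h2

lemma projT_star (x : Matrix d d ℂ) : projT T xᴴ = (projT T x)ᴴ := by
  apply projT_eq_of T (star_mem (projT_mem T x))
  intro t ht
  have h2 := projT_orth T x tᴴ (star_mem ht)
  rw [conjTranspose_conjTranspose] at h2
  simp only [Matrix.star_eq_conjTranspose]
  have e : tᴴ * (xᴴ - (projT T x)ᴴ) = ((x - projT T x) * t)ᴴ := by
    rw [conjTranspose_mul, conjTranspose_sub]
  rw [e, Matrix.trace_conjTranspose, Matrix.trace_mul_comm, h2, star_zero]

variable {d : Type*} [Fintype d] [DecidableEq d]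

lemma psd_trace_nonneg {A : Matrix d d ℂ} (hA : A.PosSemidef) : 0 ≤ A.trace := by
  exact hA.trace_nonneg

open scoped MatrixOrder in
lemma psd_trace_mul_nonneg {A B : Matrix d d ℂ} (hA : A.PosSemidef) (hB : B.PosSemidef) :
    0 ≤ (A * B).trace := by
  have hs : (CFC.sqrt A).PosSemidef := (CFC.sqrt_nonneg A).posSemidef
  have h1 : A = CFC.sqrt A * CFC.sqrt A := (CFC.sqrt_mul_sqrt_self A hA.nonneg).symm
  have h2 : (CFC.sqrt A * B * CFC.sqrt A).PosSemidef := by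
    have := hB.conjTranspose_mul_mul_same (CFC.sqrt A)
    rwa [hs.1.eq] at this
  have e : (CFC.sqrt A * B * CFC.sqrt A).trace = (A * B).trace := by
    rw [Matrix.trace_mul_comm, ← mul_assoc, CFC.sqrt_mul_sqrt_self A hA.nonneg]
  rw [← e]
  exact psd_trace_nonneg h2

lemma aeval_unitary_conj (U : Matrix d d ℂ) (hU : U ∈ Matrix.unitaryGroup d ℂ)
    (D : Matrix d d ℂ) (q : ℂ[X]) :
    aeval (U * D * star U) q = U * aeval D q * star U := by
  let φ : Matrix d d ℂ →ₐ[ℂ] Matrix d d ℂ :=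
    { toFun := fun a => U * a * star U
      map_one' := by
        simpa using (Matrix.mem_unitaryGroup_iff).1 hU
      map_mul' := fun a b => by
        have h : star U * U = 1 := (Matrix.mem_unitaryGroup_iff').1 hU
        calc U * (a * b) * star U = U * a * (star U * U) * b * star U := by
              rw [h]; noncomm_ring
        _ = U * a * star U * (U * b * star U) := by noncomm_ring
      map_zero' := by simp
      map_add' := fun a b => by noncomm_ring
      commutes' := fun z => by
        simp only [Algebra.algebraMap_eq_smul_one, mul_smul_comm, smul_mul_assoc, mul_one]
        congr 1
        exact (Matrix.mem_unitaryGroup_iff).1 hU }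
  exact (Polynomial.aeval_algHom_apply φ D q)

lemma aeval_diagonal (v : d → ℂ) (q : ℂ[X]) :
    aeval (Matrix.diagonal v) q = Matrix.diagonal (fun i => q.eval (v i)) := by
  have h1 : Matrix.diagonal v = Matrix.diagonalAlgHom ℂ v := rfl
  rw [h1, Polynomial.aeval_algHom_apply]
  have hv : (aeval v q : d → ℂ) = fun i => q.eval (v i) := by
    funext i
    have := Polynomial.aeval_algHom_apply (Pi.evalAlgHom ℂ (fun _ : d => ℂ) i) v q
    simp only [Pi.evalAlgHom_apply] at this
    rw [← this, Polynomial.coe_aeval_eq_eval]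
  rw [hv]
  rfl

lemma projT_posSemidef (T : StarSubalgebra ℂ (Matrix d d ℂ)) {x : Matrix d d ℂ}
    (hx : x.PosSemidef) : (projT T x).PosSemidef := by
  set y := projT T x with hy_def
  have hyT : y ∈ T := projT_mem T x
  have hyH : y.IsHermitian := by
    have h := projT_star T x
    rw [hx.1.eq] at h
    exact h.symm
  set μ := hyH.eigenvalues with hμ
  set U : Matrix d d ℂ := (hyH.eigenvectorUnitary : Matrix d d ℂ) with hUdef
  have hU : U ∈ Matrix.unitaryGroup d ℂ := (hyH.eigenvectorUnitary).2
  have hUU : star U * U = 1 := (Matrix.mem_unitaryGroup_iff').1 hU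
  have hspec : y = U * Matrix.diagonal (fun i => ((μ i : ℝ) : ℂ)) * star U := by
    have := hyH.spectral_theorem
    convert this using 2
    rw [Unitary.conjStarAlgAut_apply]; rfl
  set f : ℂ → ℂ := fun c => ((max (-c.re) 0 : ℝ) : ℂ) with hf
  set q : Polynomial ℂ := Lagrange.interpolate (Finset.univ.image fun i => ((μ i : ℝ) : ℂ)) id f with hq
  have heval : ∀ i, q.eval ((μ i : ℝ) : ℂ) = ((max (-(μ i)) 0 : ℝ) : ℂ) := by
    intro i
    have h := Lagrange.eval_interpolate_at_node (v := id) (r := f)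
      (i := ((μ i : ℝ) : ℂ))
      (Set.injOn_id _) (Finset.mem_image_of_mem (fun j : d => ((μ j : ℝ) : ℂ)) (Finset.mem_univ i))
    simpa [hf, hq] using h
  set z := Polynomial.aeval y q with hz
  have hzT : z ∈ T := by
    have h := Polynomial.aeval_algHom_apply (T.toSubalgebra.val) ⟨y, hyT⟩ q
    simp only [Subalgebra.coe_val] at h
    rw [hz, h]
    exact StarSubalgebra.mem_toSubalgebra.mp ((Polynomial.aeval (⟨y, hyT⟩ : T.toSubalgebra) q).2)
  have hzform : z = U * Matrix.diagonal (fun i => ((max (-(μ i)) 0 : ℝ) : ℂ)) * star U := by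
    rw [hz]
    conv_lhs => rw [hspec]
    rw [aeval_unitary_conj U hU, aeval_diagonal]
    have hd : (fun i => Polynomial.eval ((μ i : ℝ) : ℂ) q) = fun i => ((max (-(μ i)) 0 : ℝ) : ℂ) :=
      funext heval
    rw [hd]
  have hzpsd : z.PosSemidef := by
    rw [hzform, Matrix.star_eq_conjTranspose]
    refine (Matrix.PosSemidef.diagonal ?_).mul_mul_conjTranspose_same U
    intro i
    exact Complex.zero_le_real.mpr (le_max_right _ _)
  have hzherm : zᴴ = z := hzpsd.1
  have horth := projT_orth T x z hzT
  rw [← hy_def, hzherm, mul_sub, Matrix.trace_sub] at horth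
  have h5 : 0 ≤ (z * x).trace := psd_trace_mul_nonneg hzpsd hx
  have h6 : (z * y).trace = ((∑ i, μ i * max (-(μ i)) 0 : ℝ) : ℂ) := by
    rw [Matrix.trace_mul_comm, hspec, hzform]
    have e1 : U * Matrix.diagonal (fun i => ((μ i : ℝ) : ℂ)) * star U *
        (U * Matrix.diagonal (fun i => ((max (-(μ i)) 0 : ℝ) : ℂ)) * star U)
        = U * (Matrix.diagonal (fun i => ((μ i : ℝ) : ℂ)) *
            Matrix.diagonal (fun i => ((max (-(μ i)) 0 : ℝ) : ℂ))) * star U := by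
      calc U * Matrix.diagonal (fun i => ((μ i : ℝ) : ℂ)) * star U *
          (U * Matrix.diagonal (fun i => ((max (-(μ i)) 0 : ℝ) : ℂ)) * star U)
          = U * Matrix.diagonal (fun i => ((μ i : ℝ) : ℂ)) * (star U * U) *
            (Matrix.diagonal (fun i => ((max (-(μ i)) 0 : ℝ) : ℂ)) * star U) := by
            noncomm_ring
        _ = _ := by rw [hUU, mul_one]; noncomm_ring
    rw [e1, Matrix.trace_mul_cycle, ← mul_assoc, hUU, one_mul,
      Matrix.diagonal_mul_diagonal, Matrix.trace_diagonal]
    push_cast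
    rfl
  have h7 : (z * y).trace = (z * x).trace := by linear_combination -horth
  have h8 : 0 ≤ ((∑ i, μ i * max (-(μ i)) 0 : ℝ) : ℂ) := by
    rw [← h6, h7]; exact h5
  rw [Complex.zero_le_real] at h8
  have h9 : ∀ i, μ i * max (-(μ i)) 0 = -(max (-(μ i)) 0)^2 := by
    intro i
    rcases le_total (μ i) 0 with h | h
    · rw [max_eq_left (by linarith)]; ring
    · rw [max_eq_right (by linarith)]; ring
  have h10 : ∀ i, 0 ≤ μ i := by
    have hsum : ∑ i, (max (-(μ i)) 0)^2 ≤ 0 := by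
      have : ∑ i, μ i * max (-(μ i)) 0 = -∑ i, (max (-(μ i)) 0)^2 := by
        rw [← Finset.sum_neg_distrib]
        exact Finset.sum_congr rfl fun i _ => h9 i
      linarith [h8, this.symm ▸ h8]
    intro i
    have hz0 : max (-(μ i)) 0 = 0 := by
      have h1 : ∀ j ∈ Finset.univ, (0:ℝ) ≤ (max (-(μ j)) 0)^2 := fun j _ => sq_nonneg _
      have := Finset.sum_nonneg h1
      have heach := (Finset.sum_eq_zero_iff_of_nonneg h1).1 (le_antisymm hsum this)
      have := heach i (Finset.mem_univ i)
      exact pow_eq_zero_iff (by norm_num) |>.1 this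
    have : -(μ i) ≤ 0 := by
      by_contra hc
      push_neg at hc
      rw [max_eq_left hc.le] at hz0
      linarith
    linarith
  exact hyH.posSemidef_iff_eigenvalues_nonneg.mpr h10

variable {d : Type*} [Fintype d] [DecidableEq d]

def blockOf {k : ℕ} (M : Matrix (d × Fin k) (d × Fin k) ℂ) (p q : Fin k) : Matrix d d ℂ :=
  Matrix.of fun i j => M (i, p) (j, q)

def ampS (S : StarSubalgebra ℂ (Matrix d d ℂ)) (k : ℕ) :
    StarSubalgebra ℂ (Matrix (d × Fin k) (d × Fin k) ℂ) where
  carrier := {M | ∀ p q, blockOf M p q ∈ S}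
  add_mem' := by
    intro a b ha hb p q
    have : blockOf (a + b) p q = blockOf a p q + blockOf b p q := rfl
    rw [this]
    exact add_mem (ha p q) (hb p q)
  mul_mem' := by
    intro a b ha hb p q
    have : blockOf (a * b) p q = ∑ r : Fin k, blockOf a p r * blockOf b r q := by
      ext i j
      simp only [blockOf, Matrix.mul_apply, Matrix.of_apply, Finset.sum_apply,
        Matrix.sum_apply]
      rw [Fintype.sum_prod_type]
      rw [Finset.sum_comm]
    rw [this]
    exact sum_mem fun r _ => mul_mem (ha p r) (hb r q)
  algebraMap_mem' := by
    intro z p q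
    by_cases h : p = q
    · subst h
      have : blockOf (algebraMap ℂ (Matrix (d × Fin k) (d × Fin k) ℂ) z) p p
          = algebraMap ℂ (Matrix d d ℂ) z := by
        ext i j
        simp [blockOf, Matrix.algebraMap_matrix_apply, Prod.ext_iff]
      rw [this]
      exact algebraMap_mem S z
    · have : blockOf (algebraMap ℂ (Matrix (d × Fin k) (d × Fin k) ℂ) z) p q = 0 := by
        ext i j
        simp [blockOf, Matrix.algebraMap_matrix_apply, Prod.ext_iff, h]
      rw [this]
      exact zero_mem _
  star_mem' := by
    intro a ha p q
    have : blockOf (star a) p q = (blockOf a q p)ᴴ := by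
      ext i j
      simp [blockOf, Matrix.conjTranspose_apply, Matrix.star_eq_conjTranspose]
    rw [this]
    exact star_mem (ha q p)

lemma mem_ampS {S : StarSubalgebra ℂ (Matrix d d ℂ)} {k : ℕ}
    {M : Matrix (d × Fin k) (d × Fin k) ℂ} :
    M ∈ ampS S k ↔ ∀ p q, blockOf M p q ∈ S := Iff.rfl

lemma trace_block_sum {k : ℕ} (A B : Matrix (d × Fin k) (d × Fin k) ℂ) :
    (Aᴴ * B).trace = ∑ p : Fin k, ∑ q : Fin k, ((blockOf A q p)ᴴ * blockOf B q p).trace := by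
  simp only [Matrix.trace, Matrix.diag, Matrix.mul_apply, Matrix.conjTranspose_apply, blockOf,
    Matrix.of_apply]
  rw [Fintype.sum_prod_type]
  simp only [Fintype.sum_prod_type]
  rw [Finset.sum_comm]
  congr 1
  funext p
  rw [Finset.sum_comm]
  refine (Finset.sum_congr rfl fun y _ => Finset.sum_comm).trans ?_
  refine Finset.sum_comm.trans ?_
  exact Finset.sum_congr rfl fun y1 _ => Finset.sum_comm

lemma amp_proj (S : StarSubalgebra ℂ (Matrix d d ℂ)) {k : ℕ}
    (M : Matrix (d × Fin k) (d × Fin k) ℂ) :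
    (Matrix.of fun p q : d × Fin k =>
      projT S (Matrix.of fun i j => M (i, p.2) (j, q.2)) p.1 q.1)
      = projT (ampS S k) M := by
  refine (projT_eq_of _ ?_ ?_).symm
  · intro p q
    have : blockOf (Matrix.of fun p q : d × Fin k =>
        projT S (Matrix.of fun i j => M (i, p.2) (j, q.2)) p.1 q.1) p q
        = projT S (blockOf M p q) := rfl
    rw [this]
    exact projT_mem S _
  · intro t ht
    rw [trace_block_sum]
    refine Finset.sum_eq_zero fun p _ => Finset.sum_eq_zero fun q _ => ?_
    have hb : blockOf (M - Matrix.of fun p q : d × Fin k =>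
        projT S (Matrix.of fun i j => M (i, p.2) (j, q.2)) p.1 q.1) q p
        = blockOf M q p - projT S (blockOf M q p) := rfl
    rw [hb]
    exact projT_orth S (blockOf M q p) (blockOf t q p) (ht q p)

end Aux

/-- For every unital star-subalgebra `S` of the complex `n × n` matrices there exists a
unique trace-preserving conditional expectation onto `S`. -/
theorem existsUnique_trace_preserving_condExp
    {n : ℕ} (S : StarSubalgebra ℂ (Matrix (Fin n) (Fin n) ℂ)) :
    ∃! E : Matrix (Fin n) (Fin n) ℂ → Matrix (Fin n) (Fin n) ℂ,
      IsCondExpOn (S : Set (Matrix (Fin n) (Fin n) ℂ)) E ∧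
      ∀ x, (E x).trace = x.trace := by
  refine ⟨projT S, ⟨⟨projT_add S, projT_smul S, projT_one S, ?_, projT_mem S, ?_, ?_⟩,
    projT_trace S⟩, ?_⟩
  · -- complete positivity
    intro k M hM
    rw [show (Matrix.of fun p q : Fin n × Fin k =>
        projT S (Matrix.of fun i j => M (i, p.2) (j, q.2)) p.1 q.1) = projT (ampS S k) M
      from amp_proj S M]
    exact projT_posSemidef _ hM
  · intro c hc
    exact projT_fix S hc
  · intro c₁ hc₁ c₂ hc₂ x
    exact projT_bimod S hc₁ hc₂ x
  · rintro E' ⟨⟨hadd, hsmul, hone, hcp, hmem, hfix, hbimod⟩, htr⟩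
    funext x
    refine (projT_eq_of S (hmem x) ?_).symm
    intro t ht
    have hb := hbimod tᴴ (star_mem ht) 1 (one_mem S) x
    rw [mul_one, mul_one] at hb
    have h1 := htr (tᴴ * x)
    rw [hb] at h1
    rw [mul_sub, Matrix.trace_sub]
    linear_combination -h1
end

section
/- Let S be a unital star-subalgebra of Matrix n n ℂ and let ρ ∈ Matrix n n ℂ be positive definite with Tr ρ = 1. If E₁ and E₂ are both ρ-preserving conditional expectations from Matrix n n ℂ onto S, then E₁ = E₂. -/
open Matrix
open scoped ComplexOrder
open scoped MatrixOrder

/-- If `Tr (A Aᴴ) = 0` then `A = 0`. -/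
lemma trace_self_mul_conjTranspose_eq_zero {m k : Type*} [Fintype m] [Fintype k]
    {A : Matrix m k ℂ} (h : (A * Aᴴ).trace = 0) : A = 0 := by
  have h' : ∀ i, dotProduct (A i) (star (A i)) = 0 := by
    have := (Fintype.sum_eq_zero_iff_of_nonneg
      (f := fun i => dotProduct (A i) (star (A i)))
      (fun i => dotProduct_self_star_nonneg (A i))).mp ?_
    · intro i; exact congrFun this i
    · simpa [Matrix.trace, Matrix.diag, Matrix.mul_apply, dotProduct,
        Matrix.conjTranspose_apply] using h
  ext i j
  have := (dotProduct_self_star_eq_zero (v := A i)).mp (h' i)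
  exact congrFun this j

/-- A `ρ`-preserving conditional expectation onto a unital star-subalgebra is unique. -/
theorem rho_preserving_condExp_unique
    {n : ℕ} (S : StarSubalgebra ℂ (Matrix (Fin n) (Fin n) ℂ))
    (ρ : Matrix (Fin n) (Fin n) ℂ) (hρ : ρ.PosDef) (hρtr : ρ.trace = 1)
    (E₁ E₂ : Matrix (Fin n) (Fin n) ℂ → Matrix (Fin n) (Fin n) ℂ)
    (hE₁ : IsCondExpOn (S : Set (Matrix (Fin n) (Fin n) ℂ)) E₁)
    (hE₁ρ : ∀ x, (ρ * E₁ x).trace = (ρ * x).trace)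
    (hE₂ : IsCondExpOn (S : Set (Matrix (Fin n) (Fin n) ℂ)) E₂)
    (hE₂ρ : ∀ x, (ρ * E₂ x).trace = (ρ * x).trace) :
    E₁ = E₂ := by
  obtain ⟨-, -, -, -, hR₁, -, hB₁⟩ := hE₁
  obtain ⟨-, -, -, -, hR₂, -, hB₂⟩ := hE₂
  funext x
  set d : Matrix (Fin n) (Fin n) ℂ := E₁ x - E₂ x with hd
  have hdS : d ∈ S := S.sub_mem (hR₁ x) (hR₂ x)
  have hcS : dᴴ ∈ S := star_mem hdS
  have h1S : (1 : Matrix (Fin n) (Fin n) ℂ) ∈ S := S.one_mem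
  -- For any E with bimodule property and ρ-preservation: Tr(ρ dᴴ (E x)) = Tr(ρ dᴴ x)
  have key : ∀ (E : Matrix (Fin n) (Fin n) ℂ → Matrix (Fin n) (Fin n) ℂ),
      (∀ c₁ ∈ (S : Set (Matrix (Fin n) (Fin n) ℂ)), ∀ c₂ ∈ (S : Set (Matrix (Fin n) (Fin n) ℂ)),
        ∀ y, E (c₁ * y * c₂) = c₁ * E y * c₂) →
      (∀ y, (ρ * E y).trace = (ρ * y).trace) →
      (ρ * (dᴴ * E x)).trace = (ρ * (dᴴ * x)).trace := by
    intro E hB hρE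
    have : dᴴ * E x = E (dᴴ * x * 1) := by rw [hB dᴴ hcS 1 h1S x]; rw [mul_one]
    rw [this, hρE, mul_one]
  have hzero : (ρ * (dᴴ * d)).trace = 0 := by
    have h1 := key E₁ hB₁ hE₁ρ
    have h2 := key E₂ hB₂ hE₂ρ
    have : ρ * (dᴴ * d) = ρ * (dᴴ * E₁ x) - ρ * (dᴴ * E₂ x) := by
      rw [hd, Matrix.mul_sub, Matrix.mul_sub]
    rw [this, trace_sub, h1, h2, sub_self]
  -- rewrite as Tr((d √ρ)(d √ρ)ᴴ) = 0
  set B := CFC.sqrt ρ with hB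
  have hBB : B * B = ρ := CFC.sqrt_mul_sqrt_self ρ hρ.posSemidef.nonneg
  have hBH : Bᴴ = B := (CFC.sqrt_nonneg ρ).posSemidef.1
  have htr : ((d * B) * (d * B)ᴴ).trace = 0 := by
    have : (d * B) * (d * B)ᴴ = d * ρ * dᴴ := by
      rw [conjTranspose_mul, hBH, ← Matrix.mul_assoc, Matrix.mul_assoc (d * B) B dᴴ,
        Matrix.mul_assoc d B (B * dᴴ), ← Matrix.mul_assoc B B dᴴ, hBB, ← Matrix.mul_assoc]
    rw [this]
    calc (d * ρ * dᴴ).trace = (dᴴ * (d * ρ)).trace := (trace_mul_comm _ _)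
    _ = (ρ * (dᴴ * d)).trace := by
        rw [← Matrix.mul_assoc, Matrix.trace_mul_comm (dᴴ * d) ρ]
    _ = 0 := hzero
  have hdB : d * B = 0 := trace_self_mul_conjTranspose_eq_zero htr
  have hdρ : d * ρ = 0 := by
    rw [← hBB, ← Matrix.mul_assoc, hdB, Matrix.zero_mul]
  have hd0 : d = 0 := by
    have hu := hρ.isUnit
    have := congrArg (· * ρ⁻¹) hdρ
    simpa [Matrix.mul_assoc, Matrix.mul_nonsing_inv ρ (isUnit_iff_isUnit_det ρ |>.mp hu)]
      using this
  exact sub_eq_zero.mp hd0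
end

section
/- Let n, m be positive and let E be a conditional expectation from the matrix algebra Matrix (Fin n × Fin m) (Fin n × Fin m) ℂ onto the unital star-subalgebra { a ⊗ₖ 1_m : a ∈ Matrix (Fin n) (Fin n) ℂ }. Then there exists a unique positive semidefinite σ ∈ Matrix (Fin m) (Fin m) ℂ with Tr σ = 1 such that E(a ⊗ₖ b) = Tr(σ * b) • (a ⊗ₖ 1_m) for all a ∈ Matrix (Fin n) (Fin n) ℂ and b ∈ Matrix (Fin m) (Fin m) ℂ. -/
open Matrix
open scoped ComplexOrder

open scoped Kronecker

lemma isCP_posSemidef {d e : Type*} [Fintype d] [Fintype e]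
    {Φ : Matrix d d ℂ → Matrix e e ℂ} (h : IsCP Φ) {M : Matrix d d ℂ}
    (hM : M.PosSemidef) : (Φ M).PosSemidef := by
  have h1 := h 1 (M.submatrix (fun p => p.1) (fun p => p.1)) (hM.submatrix _)
  have h2 := h1.submatrix (fun q : e => (q, (0 : Fin 1)))
  have : (Matrix.of fun p q : e × Fin 1 =>
      Φ (Matrix.of fun i j => (M.submatrix (fun p : d × Fin 1 => p.1) fun p => p.1) (i, p.2) (j, q.2)) p.1 q.1).submatrix
      (fun q : e => (q, (0 : Fin 1))) (fun q : e => (q, (0 : Fin 1))) = Φ M := rfl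
  rwa [this] at h2

lemma kron_one_inj {n m : ℕ} (hm : 0 < m) {c d : Matrix (Fin n) (Fin n) ℂ}
    (h : c ⊗ₖ (1 : Matrix (Fin m) (Fin m) ℂ) = d ⊗ₖ 1) : c = d := by
  ext i j
  have := Matrix.ext_iff.mpr h (i, ⟨0, hm⟩) (j, ⟨0, hm⟩)
  simpa [Matrix.kronecker_apply] using this

lemma quadform_eq_trace {m : ℕ} (σ : Matrix (Fin m) (Fin m) ℂ) (x : Fin m → ℂ) :
    star x ⬝ᵥ σ *ᵥ x = (σ * Matrix.vecMulVec x (star x)).trace := by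
  simp only [Matrix.trace, Matrix.diag, Matrix.mul_apply, Matrix.vecMulVec_apply,
    dotProduct, Matrix.mulVec, Pi.star_apply]
  refine Finset.sum_congr rfl fun k _ => ?_
  rw [Finset.mul_sum]
  refine Finset.sum_congr rfl fun l _ => ?_
  ring

lemma vecMulVec_star_posSemidef {m : ℕ} (x : Fin m → ℂ) :
    (Matrix.vecMulVec x (star x)).PosSemidef := by
  have : Matrix.vecMulVec x (star x) = (Matrix.replicateRow Unit (star x))ᴴ * Matrix.replicateRow Unit (star x) := by
    rw [Matrix.vecMulVec_eq Unit]
    congr 1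
    ext i j
    simp
  rw [this]
  exact Matrix.posSemidef_conjTranspose_mul_self _

lemma kron_conjTranspose {n m : ℕ} (A : Matrix (Fin n) (Fin n) ℂ) (B : Matrix (Fin m) (Fin m) ℂ) :
    (A ⊗ₖ B)ᴴ = Aᴴ ⊗ₖ Bᴴ := by
  ext ⟨i, k⟩ ⟨j, l⟩
  simp [Matrix.conjTranspose_apply, Matrix.kronecker_apply, mul_comm]

lemma one_kron_posSemidef {n m : ℕ} {b : Matrix (Fin m) (Fin m) ℂ} (hb : b.PosSemidef) :
    ((1 : Matrix (Fin n) (Fin n) ℂ) ⊗ₖ b).PosSemidef := by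
  obtain ⟨B, rfl⟩ : ∃ B : Matrix (Fin m) (Fin m) ℂ, b = Bᴴ * B := by
    open scoped MatrixOrder in exact CStarAlgebra.nonneg_iff_eq_star_mul_self.mp hb.nonneg
  have : (1 : Matrix (Fin n) (Fin n) ℂ) ⊗ₖ (Bᴴ * B)
      = ((1 : Matrix (Fin n) (Fin n) ℂ) ⊗ₖ B)ᴴ * ((1 : Matrix (Fin n) (Fin n) ℂ) ⊗ₖ B) := by
    rw [kron_conjTranspose, ← Matrix.mul_kronecker_mul]
    simp
  rw [this]
  exact Matrix.posSemidef_conjTranspose_mul_self _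

lemma posSemidef_diag_nonneg {d : Type*} [Fintype d] [DecidableEq d]
    {M : Matrix d d ℂ} (hM : M.PosSemidef) (p : d) : 0 ≤ M p p := by
  exact hM.diag_nonneg

lemma trace_mul_stdBasisMatrix {m : ℕ} (σ : Matrix (Fin m) (Fin m) ℂ) (k l : Fin m) :
    (σ * Matrix.single l k 1).trace = σ k l := by
  simp [Matrix.trace, Matrix.diag, Matrix.mul_apply, Matrix.single, ite_and,
    Finset.sum_ite_eq, Finset.sum_ite_eq']

lemma single_vecMulVec {m : ℕ} (k l : Fin m) :
    Matrix.vecMulVec (Pi.single k (1:ℂ)) (star (Pi.single l (1:ℂ))) = Matrix.single k l 1 := by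
  ext a b
  rcases eq_or_ne k a with rfl | h1 <;> rcases eq_or_ne l b with rfl | h2 <;>
    simp [Matrix.vecMulVec_apply, Pi.single_apply, Matrix.single, eq_comm, *]

/-- Every conditional expectation onto the subalgebra `{ a ⊗ₖ 1 }` of a bipartite matrix
algebra is given by tracing out the second factor against a unique state `σ`. -/
theorem condExp_onto_first_factor_eq_trace_against_state
    {n m : ℕ} (hn : 0 < n) (hm : 0 < m)
    (E : Matrix (Fin n × Fin m) (Fin n × Fin m) ℂ →
         Matrix (Fin n × Fin m) (Fin n × Fin m) ℂ)
    (hE : IsCondExpOn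
        {M : Matrix (Fin n × Fin m) (Fin n × Fin m) ℂ |
          ∃ a : Matrix (Fin n) (Fin n) ℂ, M = a ⊗ₖ (1 : Matrix (Fin m) (Fin m) ℂ)} E) :
    ∃! σ : Matrix (Fin m) (Fin m) ℂ,
      σ.PosSemidef ∧ σ.trace = 1 ∧
      ∀ (a : Matrix (Fin n) (Fin n) ℂ) (b : Matrix (Fin m) (Fin m) ℂ),
        E (a ⊗ₖ b) = (σ * b).trace • (a ⊗ₖ (1 : Matrix (Fin m) (Fin m) ℂ)) := by
  obtain ⟨hadd, hsmul, hone, hcp, hrange, hfix, hbimod⟩ := hE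
  classical
  -- E(1 ⊗ b) is a scalar multiple of the identity
  have hcent : ∀ b : Matrix (Fin m) (Fin m) ℂ, ∃ z : ℂ,
      E ((1 : Matrix (Fin n) (Fin n) ℂ) ⊗ₖ b)
        = z • ((1 : Matrix (Fin n) (Fin n) ℂ) ⊗ₖ (1 : Matrix (Fin m) (Fin m) ℂ)) := by
    intro b
    obtain ⟨c, hc⟩ := hrange ((1 : Matrix (Fin n) (Fin n) ℂ) ⊗ₖ b)
    have hcomm : ∀ a : Matrix (Fin n) (Fin n) ℂ, a * c = c * a := by
      intro a
      have h1 := hbimod (a ⊗ₖ (1 : Matrix (Fin m) (Fin m) ℂ)) ⟨a, rfl⟩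
        ((1 : Matrix (Fin n) (Fin n) ℂ) ⊗ₖ (1 : Matrix (Fin m) (Fin m) ℂ)) ⟨1, rfl⟩
        ((1 : Matrix (Fin n) (Fin n) ℂ) ⊗ₖ b)
      have h2 := hbimod ((1 : Matrix (Fin n) (Fin n) ℂ) ⊗ₖ (1 : Matrix (Fin m) (Fin m) ℂ)) ⟨1, rfl⟩
        (a ⊗ₖ (1 : Matrix (Fin m) (Fin m) ℂ)) ⟨a, rfl⟩
        ((1 : Matrix (Fin n) (Fin n) ℂ) ⊗ₖ b)
      rw [hc] at h1 h2
      simp only [← Matrix.mul_kronecker_mul, one_mul, mul_one] at h1 h2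
      have h3 := h1.symm.trans h2
      exact kron_one_inj hm h3
    obtain ⟨z, hz⟩ := Matrix.mem_range_scalar_of_commute_single
      (M := c) (fun i j _ => hcomm _)
    refine ⟨z, ?_⟩
    rw [hc, ← hz]
    rw [← Matrix.smul_kronecker]
    ext i j
    simp [Matrix.scalar_apply, Matrix.diagonal_apply, Matrix.one_apply]
  set φ : Matrix (Fin m) (Fin m) ℂ → ℂ :=
    fun b => E ((1 : Matrix (Fin n) (Fin n) ℂ) ⊗ₖ b) (⟨0, hn⟩, ⟨0, hm⟩) (⟨0, hn⟩, ⟨0, hm⟩)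
    with hφdef
  have hφ : ∀ b : Matrix (Fin m) (Fin m) ℂ,
      E ((1 : Matrix (Fin n) (Fin n) ℂ) ⊗ₖ b)
        = φ b • ((1 : Matrix (Fin n) (Fin n) ℂ) ⊗ₖ (1 : Matrix (Fin m) (Fin m) ℂ)) := by
    intro b
    obtain ⟨z, hz⟩ := hcent b
    have : φ b = z := by
      rw [hφdef]
      simp only [hz, Matrix.smul_apply, Matrix.kronecker_apply, Matrix.one_apply_eq, smul_eq_mul,
        mul_one]
    rw [this, hz]
  -- E on general products
  have hEab : ∀ (a : Matrix (Fin n) (Fin n) ℂ) (b : Matrix (Fin m) (Fin m) ℂ),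
      E (a ⊗ₖ b) = φ b • (a ⊗ₖ (1 : Matrix (Fin m) (Fin m) ℂ)) := by
    intro a b
    have h1 := hbimod (a ⊗ₖ (1 : Matrix (Fin m) (Fin m) ℂ)) ⟨a, rfl⟩
      ((1 : Matrix (Fin n) (Fin n) ℂ) ⊗ₖ (1 : Matrix (Fin m) (Fin m) ℂ)) ⟨1, rfl⟩
      ((1 : Matrix (Fin n) (Fin n) ℂ) ⊗ₖ b)
    rw [hφ b] at h1
    simp only [mul_smul_comm, smul_mul_assoc, ← Matrix.mul_kronecker_mul, one_mul, mul_one] at h1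
    exact h1
  -- linearity of φ
  have hφadd : ∀ b c : Matrix (Fin m) (Fin m) ℂ, φ (b + c) = φ b + φ c := by
    intro b c
    rw [hφdef]
    simp only [Matrix.kronecker_add, hadd, Matrix.add_apply]
  have hφsmul : ∀ (z : ℂ) (b : Matrix (Fin m) (Fin m) ℂ), φ (z • b) = z * φ b := by
    intro z b
    rw [hφdef]
    simp only [Matrix.kronecker_smul, hsmul, Matrix.smul_apply, smul_eq_mul]
  have hφone : φ 1 = 1 := by
    rw [hφdef]
    simp only [Matrix.one_kronecker_one, hone, Matrix.one_apply_eq]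
  -- positivity of φ
  have hφpos : ∀ b : Matrix (Fin m) (Fin m) ℂ, b.PosSemidef → 0 ≤ φ b := by
    intro b hb
    exact posSemidef_diag_nonneg (isCP_posSemidef hcp (one_kron_posSemidef hb)) _
  -- conjugation symmetry of the associated sesquilinear form
  have hconj : ∀ v w : Fin m → ℂ,
      (starRingEnd ℂ) (φ (Matrix.vecMulVec v (star w))) = φ (Matrix.vecMulVec w (star v)) := by
    intro v w
    set p := φ (Matrix.vecMulVec v (star w)) with hp
    set q := φ (Matrix.vecMulVec w (star v)) with hq
    have h1 : 0 ≤ φ (Matrix.vecMulVec (v + w) (star (v + w))) :=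
      hφpos _ (vecMulVec_star_posSemidef _)
    have h2 : 0 ≤ φ (Matrix.vecMulVec (v + Complex.I • w) (star (v + Complex.I • w))) :=
      hφpos _ (vecMulVec_star_posSemidef _)
    have hv : 0 ≤ φ (Matrix.vecMulVec v (star v)) := hφpos _ (vecMulVec_star_posSemidef _)
    have hw : 0 ≤ φ (Matrix.vecMulVec w (star w)) := hφpos _ (vecMulVec_star_posSemidef _)
    have hex1 : Matrix.vecMulVec (v + w) (star (v + w))
        = Matrix.vecMulVec v (star v) + Matrix.vecMulVec v (star w)
          + Matrix.vecMulVec w (star v) + Matrix.vecMulVec w (star w) := by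
      ext k l
      simp only [Matrix.vecMulVec_apply, Matrix.add_apply, Pi.add_apply, Pi.star_apply, star_add]
      ring
    have hex2 : Matrix.vecMulVec (v + Complex.I • w) (star (v + Complex.I • w))
        = Matrix.vecMulVec v (star v) + (starRingEnd ℂ Complex.I) • Matrix.vecMulVec v (star w)
          + Complex.I • Matrix.vecMulVec w (star v) + Matrix.vecMulVec w (star w) := by
      ext k l
      simp only [Matrix.vecMulVec_apply, Matrix.add_apply, Matrix.smul_apply, Pi.add_apply,
        Pi.star_apply, Pi.smul_apply, star_add, star_smul, smul_eq_mul, Complex.star_def,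
        Complex.conj_I]
      ring_nf
      rw [Complex.I_sq]
      ring
    rw [hex1, hφadd, hφadd, hφadd, ← hp, ← hq] at h1
    rw [hex2] at h2
    rw [hφadd, hφadd, hφadd] at h2
    rw [show φ ((starRingEnd ℂ Complex.I) • Matrix.vecMulVec v (star w))
        = (starRingEnd ℂ Complex.I) * p from hφsmul _ _,
      show φ (Complex.I • Matrix.vecMulVec w (star v)) = Complex.I * q from hφsmul _ _] at h2
    rw [Complex.nonneg_iff] at h1 h2 hv hw
    obtain ⟨-, h1im⟩ := h1
    obtain ⟨-, h2im⟩ := h2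
    obtain ⟨-, hvim⟩ := hv
    obtain ⟨-, hwim⟩ := hw
    simp only [Complex.add_im, Complex.mul_im, Complex.conj_I, Complex.neg_im, Complex.I_im,
      Complex.I_re, Complex.neg_re] at h1im h2im
    apply Complex.ext <;>
      simp only [Complex.conj_re, Complex.conj_im] <;> linarith
  -- the state σ
  set σ : Matrix (Fin m) (Fin m) ℂ :=
    Matrix.of (fun k l => φ (Matrix.single l k 1)) with hσdef
  have hσapp : ∀ k l, σ k l = φ (Matrix.single l k 1) := fun _ _ => rfl
  let φL : Matrix (Fin m) (Fin m) ℂ →ₗ[ℂ] ℂ :=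
    { toFun := φ
      map_add' := hφadd
      map_smul' := by intro z b; simpa using hφsmul z b }
  have htr : ∀ b : Matrix (Fin m) (Fin m) ℂ, (σ * b).trace = φ b := by
    intro b
    have hb : φ b = ∑ i : Fin m, ∑ j : Fin m, b i j * φ (Matrix.single i j 1) := by
      conv_lhs => rw [Matrix.matrix_eq_sum_single b]
      rw [show φ = ⇑φL from rfl, map_sum]
      refine Finset.sum_congr rfl fun i _ => ?_
      rw [map_sum]
      refine Finset.sum_congr rfl fun j _ => ?_
      show φ _ = _
      rw [show Matrix.single i j (b i j) = b i j • Matrix.single i j 1 by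
        rw [Matrix.smul_single, smul_eq_mul, mul_one]]
      exact hφsmul _ _
    rw [hb]
    simp only [Matrix.trace, Matrix.diag, Matrix.mul_apply, hσapp]
    rw [Finset.sum_comm]
    refine Finset.sum_congr rfl fun i _ => Finset.sum_congr rfl fun j _ => ?_
    ring
  have hψ : ∀ (a : Matrix (Fin n) (Fin n) ℂ) (b : Matrix (Fin m) (Fin m) ℂ),
      E (a ⊗ₖ b) = (σ * b).trace • (a ⊗ₖ (1 : Matrix (Fin m) (Fin m) ℂ)) := by
    intro a b; rw [htr, hEab]
  have hσtrace : σ.trace = 1 := by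
    have h := htr 1
    rwa [mul_one, hφone] at h
  have hσpsd : σ.PosSemidef := by
    refine Matrix.PosSemidef.of_dotProduct_mulVec_nonneg ?_ ?_
    · ext k l
      rw [Matrix.conjTranspose_apply, hσapp, hσapp, Complex.star_def,
        ← single_vecMulVec, ← single_vecMulVec]
      exact hconj _ _
    · intro x
      rw [quadform_eq_trace, htr]
      exact hφpos _ (vecMulVec_star_posSemidef x)
  refine ⟨σ, ⟨hσpsd, hσtrace, hψ⟩, ?_⟩
  rintro σ' ⟨-, -, hψ'⟩
  ext k l
  have h1 := hψ' 1 (Matrix.single l k 1)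
  have h2 := hψ 1 (Matrix.single l k 1)
  have h3 := h1.symm.trans h2
  have h4 := Matrix.ext_iff.mpr h3 (⟨0, hn⟩, ⟨0, hm⟩) (⟨0, hn⟩, ⟨0, hm⟩)
  simp only [Matrix.smul_apply, Matrix.kronecker_apply, Matrix.one_apply_eq, smul_eq_mul,
    mul_one, one_mul] at h4
  rwa [trace_mul_stdBasisMatrix, trace_mul_stdBasisMatrix] at h4
end

section
/- Let V_1, …, V_k be complex n × n matrices with Σ_{r=1}^k V_rᴴ * V_r = 1, let Φ : Matrix n n ℂ → Matrix n n ℂ be Φ(a) = Σ_r V_rᴴ * a * V_r, and let ρ ∈ Matrix n n ℂ be positive definite with Tr(ρ * Φ(a)) = Tr(ρ * a) for all a. If c ∈ Matrix n n ℂ satisfies Φ(c) = c, then Φ(cᴴ * c) = cᴴ * c. Consequently the fixed points of Φ form a unital star-subalgebra of Matrix n n ℂ. -/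
open Matrix
open scoped ComplexOrder

/-- The trace of `Aᴴ * A` is nonnegative. -/
lemma aux_trace_conjTranspose_mul_self_nonneg {m n : ℕ} (A : Matrix (Fin m) (Fin n) ℂ) :
    0 ≤ (Aᴴ * A).trace := by
  rw [Matrix.trace]
  refine Finset.sum_nonneg fun j _ => ?_
  simp only [Matrix.diag_apply, Matrix.mul_apply, Matrix.conjTranspose_apply]
  exact Finset.sum_nonneg fun i _ => star_mul_self_nonneg _

/-- If the trace of `Aᴴ * A` is zero then `A = 0`. -/
lemma aux_trace_conjTranspose_mul_self_eq_zero {m n : ℕ} {A : Matrix (Fin m) (Fin n) ℂ}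
    (h : (Aᴴ * A).trace = 0) : A = 0 := by
  have h' : ∀ j ∈ Finset.univ, (0 : ℂ) ≤ (Aᴴ * A) j j := by
    intro j _
    simp only [Matrix.mul_apply, Matrix.conjTranspose_apply]
    exact Finset.sum_nonneg fun i _ => star_mul_self_nonneg _
  rw [Matrix.trace] at h
  have hz := (Finset.sum_eq_zero_iff_of_nonneg h').1 h
  ext i j
  have := hz j (Finset.mem_univ j)
  simp only [Matrix.mul_apply, Matrix.conjTranspose_apply] at this
  have h2 : ∀ i ∈ Finset.univ, (0 : ℂ) ≤ star (A i j) * A i j :=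
    fun i _ => star_mul_self_nonneg _
  have := (Finset.sum_eq_zero_iff_of_nonneg h2).1 this i (Finset.mem_univ i)
  rcases mul_eq_zero.1 this with h0 | h0
  · simpa using star_eq_zero.1 h0
  · simpa using h0

/-- A positive semidefinite matrix with zero trace is zero. -/
lemma aux_posSemidef_trace_zero {n : ℕ} {M : Matrix (Fin n) (Fin n) ℂ}
    (hM : M.PosSemidef) (h : M.trace = 0) : M = 0 := by
  open scoped MatrixOrder in
  obtain ⟨B, rfl⟩ := CStarAlgebra.nonneg_iff_eq_star_mul_self.mp hM.nonneg
  rw [aux_trace_conjTranspose_mul_self_eq_zero h]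
  simp

/-- If `ρ` is positive definite, `M` positive semidefinite and `trace (ρ * M) = 0`,
then `M = 0`. -/
lemma aux_faithful {n : ℕ} {ρ M : Matrix (Fin n) (Fin n) ℂ}
    (hρ : ρ.PosDef) (hM : M.PosSemidef) (h : (ρ * M).trace = 0) : M = 0 := by
  open scoped MatrixOrder in
  set s := CFC.sqrt ρ with hs
  open scoped MatrixOrder in
  set m := CFC.sqrt M with hm
  open scoped MatrixOrder in
  have hss : s * s = ρ := CFC.sqrt_mul_sqrt_self ρ hρ.posSemidef.nonneg
  open scoped MatrixOrder in
  have hmm : m * m = M := CFC.sqrt_mul_sqrt_self M hM.nonneg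
  open scoped MatrixOrder in
  have hsH : sᴴ = s := (CFC.sqrt_nonneg ρ).posSemidef.isHermitian
  open scoped MatrixOrder in
  have hmH : mᴴ = m := (CFC.sqrt_nonneg M).posSemidef.isHermitian
  have key : ((m * s)ᴴ * (m * s)).trace = 0 := by
    have : (m * s)ᴴ * (m * s) = s * (m * m) * s := by
      rw [Matrix.conjTranspose_mul, hsH, hmH]
      noncomm_ring
    rw [this, Matrix.trace_mul_cycle, hss, hmm, h]
  have hms : m * s = 0 := by
    have := aux_trace_conjTranspose_mul_self_eq_zero key
    exact this
  have hdet : IsUnit s.det := by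
    have : s.det * s.det = ρ.det := by rw [← Matrix.det_mul, hss]
    have hρd : ρ.det ≠ 0 := ne_of_gt hρ.det_pos
    refine isUnit_iff_ne_zero.2 fun h0 => hρd ?_
    rw [← this, h0, mul_zero]
  have hmz : m = 0 := by
    have := congrArg (fun X => X * s⁻¹) hms
    simpa [Matrix.mul_assoc, Matrix.mul_nonsing_inv s hdet] using this
  rw [← hmm, hmz, Matrix.mul_zero]

/-- For a unital completely positive map `Φ` preserving a faithful state `ρ`, any fixed
point `c` of `Φ` also satisfies `Φ(cᴴ c) = cᴴ c`; consequently the fixed points of `Φ`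
form a unital star-subalgebra. -/
theorem fixed_points_form_star_subalgebra
    {n k : ℕ} (V : Fin k → Matrix (Fin n) (Fin n) ℂ)
    (hV : ∑ r, (V r)ᴴ * V r = 1)
    (ρ : Matrix (Fin n) (Fin n) ℂ) (hρ : ρ.PosDef)
    (hpres : ∀ a : Matrix (Fin n) (Fin n) ℂ,
      (ρ * (∑ r, (V r)ᴴ * a * V r)).trace = (ρ * a).trace) :
    (∀ c : Matrix (Fin n) (Fin n) ℂ, (∑ r, (V r)ᴴ * c * V r) = c →
      (∑ r, (V r)ᴴ * (cᴴ * c) * V r) = cᴴ * c) ∧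
    ∃ S : StarSubalgebra ℂ (Matrix (Fin n) (Fin n) ℂ),
      (S : Set (Matrix (Fin n) (Fin n) ℂ)) =
        {c : Matrix (Fin n) (Fin n) ℂ | (∑ r, (V r)ᴴ * c * V r) = c} := by
  -- key computation: for a fixed point c,
  -- ∑ (cV−Vc)ᴴ(cV−Vc) = Φ(cᴴc) − cᴴc
  have hstarfix : ∀ c : Matrix (Fin n) (Fin n) ℂ,
      (∑ r, (V r)ᴴ * c * V r) = c → (∑ r, (V r)ᴴ * cᴴ * V r) = cᴴ := by
    intro c hc
    calc (∑ r, (V r)ᴴ * cᴴ * V r) = (∑ r, (V r)ᴴ * c * V r)ᴴ := by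
          rw [Matrix.conjTranspose_sum]
          congr 1; ext r
          rw [Matrix.conjTranspose_mul, Matrix.conjTranspose_mul,
            Matrix.conjTranspose_conjTranspose, Matrix.mul_assoc]
      _ = cᴴ := by rw [hc]
  have key : ∀ c : Matrix (Fin n) (Fin n) ℂ, (∑ r, (V r)ᴴ * c * V r) = c →
      (∑ r, (c * V r - V r * c)ᴴ * (c * V r - V r * c))
        = (∑ r, (V r)ᴴ * (cᴴ * c) * V r) - cᴴ * c := by
    intro c hc
    have expand : ∀ r : Fin k, (c * V r - V r * c)ᴴ * (c * V r - V r * c)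
        = (V r)ᴴ * (cᴴ * c) * V r - (V r)ᴴ * cᴴ * V r * c
          - cᴴ * ((V r)ᴴ * c * V r) + cᴴ * ((V r)ᴴ * V r) * c := by
      intro r
      simp only [Matrix.conjTranspose_sub, Matrix.conjTranspose_mul]
      noncomm_ring
    rw [Finset.sum_congr rfl fun r _ => expand r]
    rw [Finset.sum_add_distrib, Finset.sum_sub_distrib, Finset.sum_sub_distrib]
    rw [← Finset.sum_mul, ← Finset.mul_sum, hc]
    have h1 : (∑ r, cᴴ * ((V r)ᴴ * V r) * c) = cᴴ * c := by
      have : (∑ r, cᴴ * ((V r)ᴴ * V r) * c) = cᴴ * (∑ r, (V r)ᴴ * V r) * c := by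
        rw [Finset.mul_sum, Finset.sum_mul]
      rw [this, hV, Matrix.mul_one]
    rw [h1, hstarfix c hc]
    abel
  have hmain : ∀ c : Matrix (Fin n) (Fin n) ℂ, (∑ r, (V r)ᴴ * c * V r) = c →
      (∑ r, (V r)ᴴ * (cᴴ * c) * V r) = cᴴ * c := by
    intro c hc
    have hpsd : Matrix.PosSemidef
        (∑ r, (c * V r - V r * c)ᴴ * (c * V r - V r * c)) := by
      classical
      induction (Finset.univ : Finset (Fin k)) using Finset.induction with
      | empty => simpa using Matrix.PosSemidef.zero
      | insert _ _ hx ih =>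
        rw [Finset.sum_insert hx]
        exact (Matrix.posSemidef_conjTranspose_mul_self _).add ih
    rw [key c hc] at hpsd
    have htr : (ρ * ((∑ r, (V r)ᴴ * (cᴴ * c) * V r) - cᴴ * c)).trace = 0 := by
      rw [Matrix.mul_sub, Matrix.trace_sub, hpres (cᴴ * c), sub_self]
    have := aux_faithful hρ hpsd htr
    have := sub_eq_zero.1 this
    exact this
  refine ⟨hmain, ?_⟩
  -- fixed points commute with each V r
  have hcomm : ∀ c : Matrix (Fin n) (Fin n) ℂ, (∑ r, (V r)ᴴ * c * V r) = c →
      ∀ r, c * V r = V r * c := by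
    intro c hc r
    have hzero : (∑ r, (c * V r - V r * c)ᴴ * (c * V r - V r * c)) = 0 := by
      rw [key c hc, hmain c hc, sub_self]
    -- each summand is PSD with nonneg trace; total trace zero forces each to vanish
    have htr : (∑ r, ((c * V r - V r * c)ᴴ * (c * V r - V r * c)).trace) = 0 := by
      rw [← Matrix.trace_sum, hzero, Matrix.trace_zero]
    have hnn : ∀ s ∈ Finset.univ,
        (0:ℂ) ≤ ((c * V s - V s * c)ᴴ * (c * V s - V s * c)).trace :=
      fun s _ => aux_trace_conjTranspose_mul_self_nonneg _
    have hz := (Finset.sum_eq_zero_iff_of_nonneg hnn).1 htr r (Finset.mem_univ r)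
    have := aux_trace_conjTranspose_mul_self_eq_zero hz
    exact sub_eq_zero.1 this
  refine ⟨{ carrier := {c | (∑ r, (V r)ᴴ * c * V r) = c}
            mul_mem' := ?_
            one_mem' := ?_
            add_mem' := ?_
            zero_mem' := ?_
            algebraMap_mem' := ?_
            star_mem' := ?_ }, rfl⟩
  · -- mul_mem
    intro a b ha hb
    simp only [Set.mem_setOf_eq] at ha hb ⊢
    have : ∀ r : Fin k, (V r)ᴴ * (a * b) * V r = (V r)ᴴ * a * V r * b := by
      intro r
      calc (V r)ᴴ * (a * b) * V r = (V r)ᴴ * a * (b * V r) := by noncomm_ring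
        _ = (V r)ᴴ * a * (V r * b) := by rw [hcomm b hb r]
        _ = (V r)ᴴ * a * V r * b := by noncomm_ring
    rw [Finset.sum_congr rfl fun r _ => this r, ← Finset.sum_mul, ha]
  · -- one_mem
    simp only [Set.mem_setOf_eq, Matrix.mul_one]
    exact hV
  · -- add_mem
    intro a b ha hb
    simp only [Set.mem_setOf_eq] at ha hb ⊢
    simp only [Matrix.mul_add, Matrix.add_mul, Finset.sum_add_distrib, ha, hb]
  · -- zero_mem
    simp
  · -- algebraMap_mem
    intro z
    simp only [Set.mem_setOf_eq]
    have : ∀ r : Fin k, (V r)ᴴ * (algebraMap ℂ (Matrix (Fin n) (Fin n) ℂ) z) * V r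
        = z • ((V r)ᴴ * V r) := by
      intro r
      rw [Algebra.algebraMap_eq_smul_one]
      rw [Matrix.mul_smul, Matrix.mul_one, Matrix.smul_mul]
    rw [Finset.sum_congr rfl fun r _ => this r, ← Finset.smul_sum, hV,
      Algebra.algebraMap_eq_smul_one]
  · -- star_mem
    intro a ha
    simp only [Set.mem_setOf_eq] at ha ⊢
    exact hstarfix a ha
end

section
/- Let V_1, …, V_k be complex n × n matrices with Σ_{r=1}^k V_rᴴ * V_r = 1, and let Φ : Matrix n n ℂ → Matrix n n ℂ be Φ(a) = Σ_r V_rᴴ * a * V_r. Then a projection p ∈ Matrix n n ℂ (p = pᴴ = p * p) satisfies Φ(p) = p if and only if p commutes with every Kraus operator: p * V_r = V_r * p for all r. -/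
open Matrix

lemma sum_conjTranspose_mul_self_eq_zero' {k n : ℕ}
    (M : Fin k → Matrix (Fin n) (Fin n) ℂ)
    (h : ∑ r, (M r)ᴴ * (M r) = 0) : ∀ r, M r = 0 := by
  have key : ∀ i : Fin n, ∑ r, ∑ j, Complex.normSq (M r j i) = 0 := by
    intro i
    have h' := congrFun (congrFun h i) i
    simp only [Matrix.sum_apply, Matrix.mul_apply, Matrix.conjTranspose_apply,
      Matrix.zero_apply] at h'
    have : ∀ r j, (star (M r j i)) * (M r j i) = ((Complex.normSq (M r j i) : ℝ) : ℂ) := by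
      intro r j
      rw [Complex.normSq_eq_conj_mul_self]
      rfl
    simp only [this] at h'
    have := congrArg Complex.re h'
    simpa using this
  intro r
  ext j i
  have hk := key i
  have hterm : Complex.normSq (M r j i) = 0 := by
    have h1 : ∀ s ∈ Finset.univ, (0:ℝ) ≤ ∑ j, Complex.normSq (M s j i) :=
      fun s _ => Finset.sum_nonneg fun j _ => Complex.normSq_nonneg _
    have h2 := (Finset.sum_eq_zero_iff_of_nonneg h1).mp hk r (Finset.mem_univ r)
    have h3 : ∀ j' ∈ Finset.univ, (0:ℝ) ≤ Complex.normSq (M r j' i) :=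
      fun j' _ => Complex.normSq_nonneg _
    exact (Finset.sum_eq_zero_iff_of_nonneg h3).mp h2 j (Finset.mem_univ j)
  simpa using Complex.normSq_eq_zero.mp hterm

/-- A projection is invariant under a unital completely positive map iff it commutes with
every Kraus operator. -/
theorem projection_invariant_iff_commutes_with_kraus
    {n k : ℕ} (V : Fin k → Matrix (Fin n) (Fin n) ℂ)
    (hV : ∑ r, (V r)ᴴ * V r = 1)
    (p : Matrix (Fin n) (Fin n) ℂ) (hp_star : p = pᴴ) (hp_idem : p = p * p) :
    (∑ r, (V r)ᴴ * p * V r) = p ↔ ∀ r, p * V r = V r * p := by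
  constructor
  · intro hΦ
    set q : Matrix (Fin n) (Fin n) ℂ := 1 - p with hq
    have hq_star : q = qᴴ := by
      simp [hq, Matrix.conjTranspose_sub, ← hp_star]
    -- q Φ(p) q = 0, each term (p V_r q)ᴴ (p V_r q)
    have h1 : ∑ r, (p * V r * q)ᴴ * (p * V r * q) = 0 := by
      have : q * (∑ r, (V r)ᴴ * p * V r) * q = q * p * q := by rw [hΦ]
      have hqpq : q * p * q = 0 := by
        simp only [hq, Matrix.sub_mul, Matrix.mul_sub, Matrix.one_mul, Matrix.mul_one,
          ← hp_idem]
        abel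
      calc ∑ r, (p * V r * q)ᴴ * (p * V r * q)
          = ∑ r, q * ((V r)ᴴ * p * V r) * q := by
            refine Finset.sum_congr rfl fun r _ => ?_
            have hct : (p * V r * q)ᴴ = q * ((V r)ᴴ * p) := by
              rw [Matrix.conjTranspose_mul, Matrix.conjTranspose_mul, ← hq_star, ← hp_star]
            rw [hct]
            have : q * ((V r)ᴴ * p) * (p * V r * q)
                = q * ((V r)ᴴ * (p * p) * V r) * q := by noncomm_ring
            rw [this, ← hp_idem]
        _ = q * (∑ r, (V r)ᴴ * p * V r) * q := by
            rw [Finset.mul_sum, Finset.sum_mul]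
        _ = 0 := by rw [hΦ, hqpq]
    -- Φ(q) = q, then p Φ(q) p = 0
    have hΦq : ∑ r, (V r)ᴴ * q * V r = q := by
      have : ∑ r, (V r)ᴴ * q * V r
          = (∑ r, (V r)ᴴ * V r) - ∑ r, (V r)ᴴ * p * V r := by
        rw [← Finset.sum_sub_distrib]
        refine Finset.sum_congr rfl fun r _ => ?_
        simp [hq, Matrix.mul_sub, Matrix.sub_mul]
      rw [this, hV, hΦ]
    have h2 : ∑ r, (q * V r * p)ᴴ * (q * V r * p) = 0 := by
      have hpqp : p * q * p = 0 := by
        simp only [hq, Matrix.sub_mul, Matrix.mul_sub, Matrix.one_mul, Matrix.mul_one,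
          ← hp_idem]
        abel
      calc ∑ r, (q * V r * p)ᴴ * (q * V r * p)
          = ∑ r, p * ((V r)ᴴ * q * V r) * p := by
            refine Finset.sum_congr rfl fun r _ => ?_
            have hct : (q * V r * p)ᴴ = p * ((V r)ᴴ * q) := by
              rw [Matrix.conjTranspose_mul, Matrix.conjTranspose_mul, ← hq_star, ← hp_star]
            rw [hct]
            have : p * ((V r)ᴴ * q) * (q * V r * p)
                = p * ((V r)ᴴ * (q * q) * V r) * p := by noncomm_ring
            have hqq : q * q = q := by
              simp only [hq, Matrix.sub_mul, Matrix.mul_sub, Matrix.one_mul, Matrix.mul_one,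
                ← hp_idem]
              abel
            rw [this, hqq]
        _ = p * (∑ r, (V r)ᴴ * q * V r) * p := by
            rw [Finset.mul_sum, Finset.sum_mul]
        _ = 0 := by rw [hΦq, hpqp]
    have hz1 := sum_conjTranspose_mul_self_eq_zero' (fun r => p * V r * q) h1
    have hz2 := sum_conjTranspose_mul_self_eq_zero' (fun r => q * V r * p) h2
    intro r
    have e1 : p * V r * q = 0 := hz1 r
    have e2 : q * V r * p = 0 := hz2 r
    have e1' : p * V r = p * V r * p := by
      have := e1
      simp only [hq, Matrix.mul_sub, Matrix.mul_one, sub_eq_zero] at this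
      exact this
    have e2' : V r * p = p * V r * p := by
      have := e2
      simp only [hq, Matrix.sub_mul, Matrix.one_mul, sub_eq_zero] at this
      exact this
    exact e1'.trans e2'.symm
  · intro hcomm
    have : ∀ r, (V r)ᴴ * p * V r = (V r)ᴴ * V r * p := by
      intro r
      rw [Matrix.mul_assoc, hcomm r, ← Matrix.mul_assoc]
    calc ∑ r, (V r)ᴴ * p * V r = ∑ r, (V r)ᴴ * V r * p := by
          exact Finset.sum_congr rfl fun r _ => this r
      _ = (∑ r, (V r)ᴴ * V r) * p := by rw [Finset.sum_mul]
      _ = p := by rw [hV, Matrix.one_mul]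
end

section
/- Let V_1, …, V_k be complex n × m matrices with Σ_{r=1}^k V_rᴴ * V_r = 1_m, and let Φ : Matrix n n ℂ → Matrix m m ℂ be Φ(a) = Σ_r V_rᴴ * a * V_r. For a Hermitian matrix m₀ ∈ Matrix n n ℂ (m₀ = m₀ᴴ), the following are equivalent: (1) m₀ lies in the multiplicative domain of Φ, i.e. Φ(m₀ * m₀) = Φ(m₀) * Φ(m₀); (2) m₀ commutes with V_r * V_sᴴ for all r, s. Moreover, in that case Φ(m₀ * a) = Φ(m₀) * Φ(a) and Φ(a * m₀) = Φ(a) * Φ(m₀) for all a ∈ Matrix n n ℂ. -/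
open Matrix

lemma sum_ctms_zero {k n m : ℕ} (E : Fin k → Matrix (Fin n) (Fin m) ℂ)
    (h : ∑ r, (E r)ᴴ * E r = 0) (r : Fin k) : E r = 0 := by
  ext j i
  have h1 : (∑ r, (E r)ᴴ * E r) i i = 0 := by rw [h]; simp
  rw [Matrix.sum_apply] at h1
  simp only [Matrix.mul_apply, Matrix.conjTranspose_apply] at h1
  have h2 : ∑ r : Fin k, ∑ x : Fin n, (Complex.normSq (E r x i) : ℂ) = 0 := by
    simpa [Complex.normSq_eq_conj_mul_self] using h1
  have h3 : ∑ r : Fin k, ∑ x : Fin n, Complex.normSq (E r x i) = 0 := by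
    exact_mod_cast (by push_cast at h2 ⊢; exact_mod_cast h2 :
      ((∑ r : Fin k, ∑ x : Fin n, Complex.normSq (E r x i) : ℝ) : ℂ) = 0)
  have h4 := (Finset.sum_eq_zero_iff_of_nonneg (fun r _ =>
    Finset.sum_nonneg fun x _ => Complex.normSq_nonneg _)).mp h3 r (by simp)
  have h5 := (Finset.sum_eq_zero_iff_of_nonneg (fun x _ =>
    Complex.normSq_nonneg _)).mp h4 j (by simp)
  simpa using Complex.normSq_eq_zero.mp h5

lemma mul_through {n m k : ℕ} (V : Fin k → Matrix (Fin n) (Fin m) ℂ)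
    (hV : ∑ r, (V r)ᴴ * V r = 1)
    (m₀ : Matrix (Fin n) (Fin n) ℂ)
    (hc : ∀ r s, m₀ * (V r * (V s)ᴴ) = (V r * (V s)ᴴ) * m₀)
    (a : Matrix (Fin n) (Fin n) ℂ) :
    (∑ r, (V r)ᴴ * (m₀ * a) * V r) =
        (∑ r, (V r)ᴴ * m₀ * V r) * (∑ r, (V r)ᴴ * a * V r) ∧
    (∑ r, (V r)ᴴ * (a * m₀) * V r) =
        (∑ r, (V r)ᴴ * a * V r) * (∑ r, (V r)ᴴ * m₀ * V r) := by
  constructor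
  · have key : ∀ r s : Fin k, (V r)ᴴ * m₀ * V r * ((V s)ᴴ * a * V s)
        = ((V r)ᴴ * V r) * ((V s)ᴴ * (m₀ * a) * V s) := fun r s => by
      calc (V r)ᴴ * m₀ * V r * ((V s)ᴴ * a * V s)
          = (V r)ᴴ * (m₀ * (V r * (V s)ᴴ)) * (a * V s) := by simp only [Matrix.mul_assoc]
        _ = (V r)ᴴ * ((V r * (V s)ᴴ) * m₀) * (a * V s) := by rw [hc r s]
        _ = ((V r)ᴴ * V r) * ((V s)ᴴ * (m₀ * a) * V s) := by simp only [Matrix.mul_assoc]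
    symm
    calc (∑ r, (V r)ᴴ * m₀ * V r) * (∑ s, (V s)ᴴ * a * V s)
        = ∑ r, ∑ s, (V r)ᴴ * m₀ * V r * ((V s)ᴴ * a * V s) := by
          rw [Finset.sum_mul_sum]
      _ = ∑ s, ∑ r, (V r)ᴴ * m₀ * V r * ((V s)ᴴ * a * V s) := Finset.sum_comm
      _ = ∑ s, (∑ r, (V r)ᴴ * V r) * ((V s)ᴴ * (m₀ * a) * V s) := by
          refine Finset.sum_congr rfl fun s _ => ?_
          rw [Finset.sum_mul]
          exact Finset.sum_congr rfl fun r _ => key r s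
      _ = ∑ s, (V s)ᴴ * (m₀ * a) * V s := by
          refine Finset.sum_congr rfl fun s _ => ?_
          rw [hV, one_mul]
  · have key : ∀ r s : Fin k, (V r)ᴴ * a * V r * ((V s)ᴴ * m₀ * V s)
        = ((V r)ᴴ * (a * m₀) * V r) * ((V s)ᴴ * V s) := fun r s => by
      calc (V r)ᴴ * a * V r * ((V s)ᴴ * m₀ * V s)
          = (V r)ᴴ * a * ((V r * (V s)ᴴ) * m₀) * V s := by simp only [Matrix.mul_assoc]
        _ = (V r)ᴴ * a * (m₀ * (V r * (V s)ᴴ)) * V s := by rw [hc r s]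
        _ = ((V r)ᴴ * (a * m₀) * V r) * ((V s)ᴴ * V s) := by simp only [Matrix.mul_assoc]
    symm
    calc (∑ r, (V r)ᴴ * a * V r) * (∑ s, (V s)ᴴ * m₀ * V s)
        = ∑ r, ∑ s, (V r)ᴴ * a * V r * ((V s)ᴴ * m₀ * V s) := by
          rw [Finset.sum_mul_sum]
      _ = ∑ r, ((V r)ᴴ * (a * m₀) * V r) * (∑ s, (V s)ᴴ * V s) := by
          refine Finset.sum_congr rfl fun r _ => ?_
          rw [Finset.mul_sum]
          exact Finset.sum_congr rfl fun s _ => key r s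
      _ = ∑ r, (V r)ᴴ * (a * m₀) * V r := by
          refine Finset.sum_congr rfl fun r _ => ?_
          rw [hV, mul_one]

/-- A Hermitian matrix `m₀` lies in the multiplicative domain of the unital completely
positive map `Φ` iff it commutes with `V_r V_sᴴ` for all `r, s`; in that case `m₀`
multiplies through `Φ` on both sides. -/
theorem multiplicative_domain_iff_commutes
    {n m k : ℕ} (V : Fin k → Matrix (Fin n) (Fin m) ℂ)
    (hV : ∑ r, (V r)ᴴ * V r = 1)
    (m₀ : Matrix (Fin n) (Fin n) ℂ) (hm₀ : m₀ = m₀ᴴ) :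
    ((∑ r, (V r)ᴴ * (m₀ * m₀) * V r) =
        (∑ r, (V r)ᴴ * m₀ * V r) * (∑ r, (V r)ᴴ * m₀ * V r) ↔
      ∀ r s, m₀ * (V r * (V s)ᴴ) = (V r * (V s)ᴴ) * m₀) ∧
    ((∑ r, (V r)ᴴ * (m₀ * m₀) * V r) =
        (∑ r, (V r)ᴴ * m₀ * V r) * (∑ r, (V r)ᴴ * m₀ * V r) →
      ∀ a : Matrix (Fin n) (Fin n) ℂ,
        (∑ r, (V r)ᴴ * (m₀ * a) * V r) =
          (∑ r, (V r)ᴴ * m₀ * V r) * (∑ r, (V r)ᴴ * a * V r) ∧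
        (∑ r, (V r)ᴴ * (a * m₀) * V r) =
          (∑ r, (V r)ᴴ * a * V r) * (∑ r, (V r)ᴴ * m₀ * V r)) := by
  set P : Matrix (Fin m) (Fin m) ℂ := ∑ r, (V r)ᴴ * m₀ * V r with hPdef
  have hP : Pᴴ = P := by
    rw [hPdef]
    simp only [Matrix.conjTranspose_sum, Matrix.conjTranspose_mul,
      Matrix.conjTranspose_conjTranspose, ← hm₀]
    exact Finset.sum_congr rfl fun r _ => by simp only [Matrix.mul_assoc]
  have fwd : (∑ r, (V r)ᴴ * (m₀ * m₀) * V r) = P * P →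
      ∀ r s, m₀ * (V r * (V s)ᴴ) = (V r * (V s)ᴴ) * m₀ := by
    intro h1
    have expand : ∀ r : Fin k, (m₀ * V r - V r * P)ᴴ * (m₀ * V r - V r * P)
        = (V r)ᴴ * (m₀ * m₀) * V r - ((V r)ᴴ * m₀ * V r) * P
          - P * ((V r)ᴴ * m₀ * V r) + P * ((V r)ᴴ * V r) * P := fun r => by
      simp only [Matrix.conjTranspose_sub, Matrix.conjTranspose_mul,
        Matrix.conjTranspose_conjTranspose, ← hm₀, hP]
      rw [Matrix.sub_mul, Matrix.mul_sub, Matrix.mul_sub]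
      simp only [Matrix.mul_assoc]
      abel
    have hEsum : ∑ r, (m₀ * V r - V r * P)ᴴ * (m₀ * V r - V r * P) = 0 := by
      calc ∑ r, (m₀ * V r - V r * P)ᴴ * (m₀ * V r - V r * P)
          = ∑ r, ((V r)ᴴ * (m₀ * m₀) * V r - ((V r)ᴴ * m₀ * V r) * P
            - P * ((V r)ᴴ * m₀ * V r) + P * ((V r)ᴴ * V r) * P) :=
            Finset.sum_congr rfl fun r _ => expand r
        _ = (∑ r, (V r)ᴴ * (m₀ * m₀) * V r) - (∑ r, (V r)ᴴ * m₀ * V r) * P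
            - P * (∑ r, (V r)ᴴ * m₀ * V r) + P * (∑ r, (V r)ᴴ * V r) * P := by
            simp only [Finset.sum_add_distrib, Finset.sum_sub_distrib,
              Finset.sum_mul, Finset.mul_sum]
        _ = P * P - P * P - P * P + P * 1 * P := by rw [h1, hV]
        _ = 0 := by rw [Matrix.mul_one]; abel
    have hE : ∀ r, m₀ * V r = V r * P := fun r => by
      have := sum_ctms_zero (fun r => m₀ * V r - V r * P) hEsum r
      exact sub_eq_zero.mp this
    have hE' : ∀ s, (V s)ᴴ * m₀ = P * (V s)ᴴ := fun s => by
      have h := congrArg Matrix.conjTranspose (hE s)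
      simpa [Matrix.conjTranspose_mul, ← hm₀, hP] using h
    intro r s
    calc m₀ * (V r * (V s)ᴴ) = (m₀ * V r) * (V s)ᴴ := (Matrix.mul_assoc _ _ _).symm
      _ = (V r * P) * (V s)ᴴ := by rw [hE r]
      _ = V r * (P * (V s)ᴴ) := Matrix.mul_assoc _ _ _
      _ = V r * ((V s)ᴴ * m₀) := by rw [hE' s]
      _ = (V r * (V s)ᴴ) * m₀ := (Matrix.mul_assoc _ _ _).symm
  refine ⟨⟨fwd, fun hc => (mul_through V hV m₀ hc m₀).1⟩, fun h1 a =>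
    mul_through V hV m₀ (fwd h1) a⟩
end

section
/- Let V_1, …, V_k be complex n × m matrices with Σ_{r=1}^k V_rᴴ * V_r = 1_m. Suppose c ∈ Matrix m m ℂ and X ∈ Matrix n n ℂ satisfy the recovery equations X * V_r = V_r * c and Xᴴ * V_r = V_r * cᴴ for every r. Then Σ_r V_rᴴ * X * V_r = c, and c commutes with V_rᴴ * V_s for all r, s. -/
open Matrix

/-- If `X` satisfies the recovery equations `X V_r = V_r c` and `Xᴴ V_r = V_r cᴴ`, then
`Φ(X) = c` and `c` commutes with `V_rᴴ V_s` for all `r, s`. -/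
theorem recovery_equation_consequences
    {n m k : ℕ} (V : Fin k → Matrix (Fin n) (Fin m) ℂ)
    (hV : ∑ r, (V r)ᴴ * V r = 1)
    (c : Matrix (Fin m) (Fin m) ℂ) (X : Matrix (Fin n) (Fin n) ℂ)
    (hX : ∀ r, X * V r = V r * c)
    (hXstar : ∀ r, Xᴴ * V r = V r * cᴴ) :
    (∑ r, (V r)ᴴ * X * V r) = c ∧
    ∀ r s, c * ((V r)ᴴ * V s) = ((V r)ᴴ * V s) * c := by
  have key : ∀ r, (V r)ᴴ * X = c * (V r)ᴴ := by
    intro r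
    have := congrArg conjTranspose (hXstar r)
    simpa [Matrix.conjTranspose_mul] using this
  constructor
  · calc (∑ r, (V r)ᴴ * X * V r) = ∑ r, (V r)ᴴ * V r * c := by
          simp [Matrix.mul_assoc, hX]
      _ = (∑ r, (V r)ᴴ * V r) * c := by rw [Finset.sum_mul]
      _ = c := by rw [hV, one_mul]
  · intro r s
    calc c * ((V r)ᴴ * V s) = ((V r)ᴴ * X) * V s := by rw [key, Matrix.mul_assoc]
      _ = (V r)ᴴ * (V s * c) := by rw [Matrix.mul_assoc, hX]
      _ = ((V r)ᴴ * V s) * c := by rw [Matrix.mul_assoc]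
end

section
/- Let V_1, …, V_k be complex n × n matrices with Σ_{r=1}^k V_rᴴ * V_r = 1, let Φ : Matrix n n ℂ → Matrix n n ℂ be Φ(a) = Σ_r V_rᴴ * a * V_r, and let ρ ∈ Matrix n n ℂ be positive definite with Tr ρ = 1 and Tr(ρ * Φ(a)) = Tr(ρ * a) for all a. Suppose that for every a ∈ Matrix n n ℂ the Cesàro means (1/N) Σ_{j=0}^{N-1} Φ^j(a) converge entrywise as N → ∞ to E(a). Then E is a ρ-preserving conditional expectation from Matrix n n ℂ onto the fixed-point set { c : Φ(c) = c } (which is a unital star-subalgebra), and it satisfies Φ ∘ E = E ∘ Φ = E and E ∘ E = E. -/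
open Matrix
open scoped ComplexOrder

set_option linter.unusedSectionVars false
namespace CesaroAux
open Matrix Filter
open scoped ComplexOrder

variable {d : Type*} [Fintype d] [DecidableEq d]

lemma psd_trace_nonneg {M : Matrix d d ℂ} (hM : M.PosSemidef) : 0 ≤ M.trace := by
  rw [Matrix.trace]
  apply Finset.sum_nonneg
  intro i _
  have := hM.dotProduct_mulVec_nonneg (Pi.single i 1)
  simpa [Matrix.diag, dotProduct, mulVec, Pi.single_apply, Finset.sum_ite_eq,
    Finset.sum_ite_eq'] using this

lemma trace_rho_conj_nonneg {ρ : Matrix d d ℂ} (hρ : ρ.PosSemidef) (B : Matrix d d ℂ) :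
    0 ≤ (ρ * (Bᴴ * B)).trace := by
  rw [← mul_assoc, Matrix.trace_mul_cycle]
  exact psd_trace_nonneg (hρ.mul_mul_conjTranspose_same B)

lemma faithful {ρ : Matrix d d ℂ} (hρ : ρ.PosDef) {B : Matrix d d ℂ}
    (h : (ρ * (Bᴴ * B)).trace = 0) : B = 0 := by
  rw [← mul_assoc, Matrix.trace_mul_cycle] at h
  -- trace (B * ρ * Bᴴ) = 0
  have hdiag : ∀ i, (B * ρ * Bᴴ) i i = 0 := by
    have hnn : ∀ i ∈ Finset.univ, 0 ≤ ((B * ρ * Bᴴ).diag i) := fun i _ => by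
      have := (hρ.posSemidef.mul_mul_conjTranspose_same B).dotProduct_mulVec_nonneg (Pi.single i 1)
      simpa [Matrix.diag, dotProduct, mulVec, Pi.single_apply] using this
    intro i
    have := (Finset.sum_eq_zero_iff_of_nonneg hnn).mp h i (Finset.mem_univ i)
    simpa [Matrix.diag] using this
  ext i t
  by_contra hBit
  have hx : (fun s => star (B i s)) ≠ 0 := by
    intro hx0
    have := congrFun hx0 t
    simp at this
    exact hBit this
  have hpos := hρ.dotProduct_mulVec_pos hx
  have : star (fun s => star (B i s)) ⬝ᵥ ρ *ᵥ (fun s => star (B i s)) = (B * ρ * Bᴴ) i i := by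
    simp [dotProduct, mulVec, Matrix.mul_apply, Finset.mul_sum, Finset.sum_mul,
      conjTranspose_apply]
    rw [Finset.sum_comm]
    exact Finset.sum_congr rfl fun x _ => Finset.sum_congr rfl fun y _ => by ring
  rw [this, hdiag i] at hpos
  exact lt_irrefl _ hpos

variable {κ : Type*} [Fintype κ]

lemma kraus_star (V : κ → Matrix d d ℂ) (a : Matrix d d ℂ) :
    ∑ r, (V r)ᴴ * aᴴ * V r = (∑ r, (V r)ᴴ * a * V r)ᴴ := by
  rw [Matrix.conjTranspose_sum]
  exact Finset.sum_congr rfl fun r _ => by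
    simp [Matrix.conjTranspose_mul, mul_assoc]

lemma schwarz_id (V : κ → Matrix d d ℂ) (hV : ∑ r, (V r)ᴴ * V r = 1)
    (a : Matrix d d ℂ) :
    ∑ r, (a * V r - V r * (∑ s, (V s)ᴴ * a * V s))ᴴ *
        (a * V r - V r * (∑ s, (V s)ᴴ * a * V s)) =
      (∑ r, (V r)ᴴ * (aᴴ * a) * V r) -
        (∑ r, (V r)ᴴ * a * V r)ᴴ * (∑ r, (V r)ᴴ * a * V r) := by
  set T := ∑ s, (V s)ᴴ * a * V s with hT
  have h1 : ∀ r, (a * V r - V r * T)ᴴ * (a * V r - V r * T) =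
      (V r)ᴴ * (aᴴ * a) * V r - ((V r)ᴴ * aᴴ * V r) * T
        - Tᴴ * ((V r)ᴴ * a * V r) + Tᴴ * ((V r)ᴴ * V r) * T := by
    intro r
    simp only [Matrix.conjTranspose_sub, Matrix.conjTranspose_mul]
    noncomm_ring
  simp only [h1, Finset.sum_add_distrib, Finset.sum_sub_distrib, ← Finset.sum_mul,
    ← Finset.mul_sum, kraus_star, ← hT, hV]
  noncomm_ring

section withRho
variable {ρ : Matrix d d ℂ} (V : κ → Matrix d d ℂ)
  (hV : ∑ r, (V r)ᴴ * V r = 1)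
  (hpres : ∀ a : Matrix d d ℂ, (ρ * ∑ r, (V r)ᴴ * a * V r).trace = (ρ * a).trace)

include hV hpres in
lemma kraus_contraction (hρ : ρ.PosSemidef) (a : Matrix d d ℂ) :
    (ρ * ((∑ r, (V r)ᴴ * a * V r)ᴴ * (∑ r, (V r)ᴴ * a * V r))).trace
      ≤ (ρ * (aᴴ * a)).trace := by
  set T := ∑ s, (V s)ᴴ * a * V s with hT
  have key : 0 ≤ (ρ * ((∑ r, (V r)ᴴ * (aᴴ * a) * V r) - Tᴴ * T)).trace := by
    rw [← schwarz_id V hV a, Finset.mul_sum, Matrix.trace_sum]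
    exact Finset.sum_nonneg fun r _ => trace_rho_conj_nonneg hρ _
  rw [mul_sub, Matrix.trace_sub, sub_nonneg, hpres (aᴴ * a)] at key
  exact le_trans (le_of_eq rfl) key

include hV hpres in
lemma fixed_commutes (hρ : ρ.PosDef) {c : Matrix d d ℂ}
    (hc : ∑ r, (V r)ᴴ * c * V r = c) (r : κ) : c * V r = V r * c := by
  have hsum : ∑ r, (ρ * ((c * V r - V r * c)ᴴ * (c * V r - V r * c))).trace = 0 := by
    have := schwarz_id V hV c
    rw [hc] at this
    rw [← Matrix.trace_sum, ← Finset.mul_sum, this, mul_sub, Matrix.trace_sub,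
      hpres (cᴴ * c), sub_eq_zero]
  have heach := (Finset.sum_eq_zero_iff_of_nonneg
    (fun r _ => trace_rho_conj_nonneg hρ.posSemidef (c * V r - V r * c))).mp hsum
  have := faithful hρ (heach r (Finset.mem_univ r))
  rwa [sub_eq_zero] at this

end withRho

noncomputable def rhoCore (ρ : Matrix d d ℂ) (hρ : ρ.PosSemidef) :
    PreInnerProductSpace.Core ℂ (Matrix d d ℂ) where
  inner x y := (ρ * (xᴴ * y)).trace
  conj_inner_symm x y := by
    show starRingEnd ℂ ((ρ * (yᴴ * x)).trace) = (ρ * (xᴴ * y)).trace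
    have h0 : (starRingEnd ℂ) ((ρ * (yᴴ * x)).trace) = ((ρ * (yᴴ * x))ᴴ).trace := by
      rw [Matrix.trace_conjTranspose]; rfl
    rw [h0, Matrix.conjTranspose_mul, Matrix.conjTranspose_mul, hρ.1.eq,
      conjTranspose_conjTranspose, Matrix.trace_mul_comm]
  re_inner_nonneg x := by
    show 0 ≤ ((ρ * (xᴴ * x)).trace).re
    have := trace_rho_conj_nonneg hρ x
    rw [Complex.le_def] at this
    simpa using this.1
  add_left x y z := by
    show (ρ * ((x + y)ᴴ * z)).trace = (ρ * (xᴴ * z)).trace + (ρ * (yᴴ * z)).trace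
    simp [Matrix.conjTranspose_add, Matrix.add_mul, Matrix.mul_add, Matrix.trace_add]
  smul_left x y r := by
    show (ρ * ((r • x)ᴴ * y)).trace = starRingEnd ℂ r * (ρ * (xᴴ * y)).trace
    simp [Matrix.conjTranspose_smul, Matrix.smul_mul, Matrix.mul_smul, Matrix.trace_smul,
      smul_eq_mul]

lemma entry_bound {ρ : Matrix d d ℂ} (hρ : ρ.PosDef) (i j : d) :
    ∃ C : ℝ, 0 ≤ C ∧ ∀ b : Matrix d d ℂ,
      ‖b i j‖ * ‖b i j‖ ≤ C * ((ρ * (bᴴ * b)).trace).re := by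
  letI core := rhoCore ρ hρ.posSemidef
  set g : Matrix d d ℂ := (ρ⁻¹ * Matrix.single j i 1)ᴴ with hg
  have hinner : ∀ b : Matrix d d ℂ, (ρ * (gᴴ * b)).trace = b i j := by
    intro b
    rw [hg, conjTranspose_conjTranspose, ← mul_assoc, ← mul_assoc,
      Matrix.mul_nonsing_inv ρ (Matrix.isUnit_iff_isUnit_det _ |>.1 hρ.isUnit),
      Matrix.one_mul]
    simp [Matrix.trace, Matrix.diag, Matrix.mul_apply, Matrix.single, ite_and]
  refine ⟨((ρ * (gᴴ * g)).trace).re, core.re_inner_nonneg g, fun b => ?_⟩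
  have hcs := @InnerProductSpace.Core.inner_mul_inner_self_le ℂ _ _ _ _ core g b
  have h1 : @inner ℂ _ (InnerProductSpace.Core.toPreInner' (c := core)) g b = b i j := hinner b
  have h2 : @inner ℂ _ (InnerProductSpace.Core.toPreInner' (c := core)) b g =
      starRingEnd ℂ (b i j) := by rw [← core.conj_inner_symm, h1]
  rw [h1, h2] at hcs
  simp at hcs
  exact hcs

lemma tendsto_small {x : ℕ → ℂ} {K : ℝ} (h : ∀ N, ‖x N‖ ≤ K) :
    Tendsto (fun N : ℕ => (N : ℂ)⁻¹ * x N) atTop (nhds 0) := by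
  refine squeeze_zero_norm (a := fun N : ℕ => K / (N : ℝ)) (fun N => ?_)
    (tendsto_const_div_atTop_nhds_zero_nat K)
  rw [norm_mul, norm_inv, Complex.norm_natCast]
  show (↑N)⁻¹ * ‖x N‖ ≤ K / (N : ℝ)
  rw [div_eq_inv_mul]
  rcases Nat.eq_zero_or_pos N with h0 | h0
  · simp [h0]
  · exact mul_le_mul_of_nonneg_left (h N) (by positivity)

section bdd
variable {ρ : Matrix d d ℂ} (V : κ → Matrix d d ℂ)
  (hV : ∑ r, (V r)ᴴ * V r = 1)
  (hpres : ∀ a : Matrix d d ℂ, (ρ * ∑ r, (V r)ᴴ * a * V r).trace = (ρ * a).trace)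

include hV hpres in
lemma iter_entry_bound (hρ : ρ.PosDef) (a : Matrix d d ℂ) (i j : d) :
    ∃ K : ℝ, ∀ l : ℕ,
      ‖((fun a => ∑ r, (V r)ᴴ * a * V r)^[l] a) i j‖ ≤ K := by
  set Φ : Matrix d d ℂ → Matrix d d ℂ := fun a => ∑ r, (V r)ᴴ * a * V r with hΦ
  have hq : ∀ l : ℕ, ((ρ * ((Φ^[l] a)ᴴ * Φ^[l] a)).trace).re
      ≤ ((ρ * (aᴴ * a)).trace).re := by
    intro l
    induction l with
    | zero => simp
    | succ m ih =>
      rw [Function.iterate_succ_apply']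
      refine le_trans ?_ ih
      have := kraus_contraction V hV hpres hρ.posSemidef (Φ^[m] a)
      rw [Complex.le_def] at this
      exact this.1
  obtain ⟨C, hC, hCb⟩ := entry_bound hρ i j
  refine ⟨max 1 (C * ((ρ * (aᴴ * a)).trace).re), fun l => ?_⟩
  have h1 := hCb (Φ^[l] a)
  have h2 : ‖(Φ^[l] a) i j‖ * ‖(Φ^[l] a) i j‖ ≤ C * ((ρ * (aᴴ * a)).trace).re :=
    le_trans h1 (mul_le_mul_of_nonneg_left (hq l) hC)
  rcases le_or_gt ‖(Φ^[l] a) i j‖ 1 with h | h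
  · exact le_trans h (le_max_left _ _)
  · refine le_trans ?_ (le_trans h2 (le_max_right _ _))
    nlinarith [norm_nonneg ((Φ^[l] a) i j)]
end bdd

def blockMap {k : ℕ} (Ψ : Matrix d d ℂ → Matrix d d ℂ)
    (M : Matrix (d × Fin k) (d × Fin k) ℂ) : Matrix (d × Fin k) (d × Fin k) ℂ :=
  Matrix.of fun p q => Ψ (Matrix.of fun i j => M (i, p.2) (j, q.2)) p.1 q.1

lemma blockMap_comp {k : ℕ} (Ψ₁ Ψ₂ : Matrix d d ℂ → Matrix d d ℂ)
    (M : Matrix (d × Fin k) (d × Fin k) ℂ) :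
    blockMap (fun a => Ψ₁ (Ψ₂ a)) M = blockMap Ψ₁ (blockMap Ψ₂ M) := by
  ext p q
  rfl

lemma blockMap_kraus_psd {k : ℕ} (V : κ → Matrix d d ℂ)
    {M : Matrix (d × Fin k) (d × Fin k) ℂ} (hM : M.PosSemidef) :
    (blockMap (fun a => ∑ r, (V r)ᴴ * a * V r) M).PosSemidef := by
  set W : κ → Matrix (d × Fin k) (d × Fin k) ℂ :=
    fun r => Matrix.of fun p q => V r p.1 q.1 * (if p.2 = q.2 then 1 else 0) with hW
  have hrep : blockMap (fun a => ∑ r, (V r)ᴴ * a * V r) M = ∑ r, (W r)ᴴ * M * (W r) := by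
    ext p q
    simp only [blockMap, Matrix.of_apply, Matrix.sum_apply, Matrix.mul_apply,
      Matrix.conjTranspose_apply, hW, star_mul', apply_ite (star : ℂ → ℂ), star_one, star_zero,
      Fintype.sum_prod_type, Finset.sum_mul, Finset.mul_sum,
      mul_ite, ite_mul, mul_one, mul_zero, zero_mul, one_mul,
      Finset.sum_ite_eq, Finset.sum_ite_eq', Finset.mem_univ, if_true]
  rw [hrep]
  exact Finset.sum_induction _ _ (fun A B hA hB => hA.add hB) Matrix.PosSemidef.zero
    (fun r _ => hM.conjTranspose_mul_mul_same (W r))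

lemma posSemidef_smul_inv_nat {m : Type*} [Fintype m] (N : ℕ)
    {X : Matrix m m ℂ} (hX : X.PosSemidef) : ((N : ℂ)⁻¹ • X).PosSemidef := by
  have hnn : (0 : ℂ) ≤ (N : ℂ)⁻¹ := by
    have hc : ((N : ℂ))⁻¹ = (((N : ℝ)⁻¹ : ℝ) : ℂ) := by push_cast; ring
    rw [hc, Complex.zero_le_real]
    positivity
  refine Matrix.PosSemidef.of_dotProduct_mulVec_nonneg ?_ ?_
  · show ((N : ℂ)⁻¹ • X)ᴴ = (N : ℂ)⁻¹ • X
    rw [Matrix.conjTranspose_smul, hX.1.eq]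
    congr 1
    simp
  · intro x
    rw [Matrix.smul_mulVec, dotProduct_smul, smul_eq_mul]
    exact mul_nonneg hnn (hX.dotProduct_mulVec_nonneg x)

lemma posSemidef_of_tendsto {m : Type*} [Fintype m]
    {g : ℕ → Matrix m m ℂ} {L : Matrix m m ℂ}
    (hg : ∀ N, (g N).PosSemidef)
    (h : ∀ p q, Tendsto (fun N => g N p q) atTop (nhds (L p q))) : L.PosSemidef := by
  refine Matrix.PosSemidef.of_dotProduct_mulVec_nonneg ?_ ?_
  · ext p q
    rw [Matrix.conjTranspose_apply]
    have h1 : Tendsto (fun N => star (g N q p)) atTop (nhds (star (L q p))) := (h q p).star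
    have h2 : (fun N => star (g N q p)) = fun N => g N p q := by
      funext N
      rw [← Matrix.conjTranspose_apply, (hg N).1.eq]
    rw [h2] at h1
    exact tendsto_nhds_unique h1 (h p q)
  · intro x
    have hterm : Tendsto (fun N => star x ⬝ᵥ (g N) *ᵥ x) atTop (nhds (star x ⬝ᵥ L *ᵥ x)) := by
      simp only [dotProduct, mulVec]
      exact tendsto_finset_sum _ fun i _ =>
        (tendsto_finset_sum _ fun j _ => ((h i j).mul_const (x j))).const_mul _
    rw [Complex.le_def]
    constructor
    · simp only [Complex.zero_re]
      refine ge_of_tendsto' (Complex.continuous_re.continuousAt.tendsto.comp hterm) fun N => ?_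
      have := (hg N).dotProduct_mulVec_nonneg x
      rw [Complex.le_def] at this
      simpa using this.1
    · simp only [Complex.zero_im]
      have him : Tendsto (fun N => (star x ⬝ᵥ (g N) *ᵥ x).im) atTop
          (nhds ((star x ⬝ᵥ L *ᵥ x).im)) :=
        Complex.continuous_im.continuousAt.tendsto.comp hterm
      have hz : (fun N => (star x ⬝ᵥ (g N) *ᵥ x).im) = fun _ => (0 : ℝ) := by
        funext N
        have := (hg N).dotProduct_mulVec_nonneg x
        rw [Complex.le_def] at this
        simpa using this.2.symm
      rw [hz] at him
      exact (tendsto_nhds_unique him tendsto_const_nhds).symm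

lemma tendsto_entry_mul {f : ℕ → Matrix d d ℂ} {L : Matrix d d ℂ}
    (h : ∀ i j, Tendsto (fun N => f N i j) atTop (nhds (L i j)))
    (A B : Matrix d d ℂ) (i j : d) :
    Tendsto (fun N => (A * f N * B) i j) atTop (nhds ((A * L * B) i j)) := by
  simp only [Matrix.mul_apply, Finset.sum_mul]
  exact tendsto_finset_sum _ fun t _ => tendsto_finset_sum _ fun s _ =>
    (((h s t).const_mul (A i s)).mul_const (B t j))

lemma tendsto_trace_mul {f : ℕ → Matrix d d ℂ} {L : Matrix d d ℂ}
    (h : ∀ i j, Tendsto (fun N => f N i j) atTop (nhds (L i j)))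
    (A : Matrix d d ℂ) :
    Tendsto (fun N => (A * f N).trace) atTop (nhds ((A * L).trace)) := by
  simp only [Matrix.trace, Matrix.diag, Matrix.mul_apply]
  exact tendsto_finset_sum _ fun i _ => tendsto_finset_sum _ fun s _ => (h s i).const_mul _

end CesaroAux

open Filter in
/-- The Cesàro means of a `ρ`-preserving unital completely positive map converge to the
`ρ`-preserving conditional expectation onto its fixed-point subalgebra. -/
theorem cesaro_limit_is_condExp_onto_fixed_points
    {n k : ℕ} (V : Fin k → Matrix (Fin n) (Fin n) ℂ)
    (hV : ∑ r, (V r)ᴴ * V r = 1)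
    (ρ : Matrix (Fin n) (Fin n) ℂ) (hρ : ρ.PosDef) (hρtr : ρ.trace = 1) :
    let Φ : Matrix (Fin n) (Fin n) ℂ → Matrix (Fin n) (Fin n) ℂ :=
      fun a => ∑ r, (V r)ᴴ * a * V r
    ∀ (hpres : ∀ a, (ρ * Φ a).trace = (ρ * a).trace)
      (E : Matrix (Fin n) (Fin n) ℂ → Matrix (Fin n) (Fin n) ℂ),
      (∀ (a : Matrix (Fin n) (Fin n) ℂ) (i j : Fin n),
        Tendsto (fun N : ℕ => (N : ℂ)⁻¹ * ∑ l ∈ Finset.range N, (Φ^[l] a) i j)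
          atTop (nhds (E a i j))) →
      IsCondExpOn {c : Matrix (Fin n) (Fin n) ℂ | Φ c = c} E ∧
      (∀ x, (ρ * E x).trace = (ρ * x).trace) ∧
      (∀ a, Φ (E a) = E a) ∧ (∀ a, E (Φ a) = E a) ∧ (∀ a, E (E a) = E a) ∧
      ∃ S : StarSubalgebra ℂ (Matrix (Fin n) (Fin n) ℂ),
        (S : Set (Matrix (Fin n) (Fin n) ℂ)) =
          {c : Matrix (Fin n) (Fin n) ℂ | Φ c = c} := by
  intro Φ hpres E hE
  classical
  have hΦ : ∀ a, Φ a = ∑ r, (V r)ᴴ * a * V r := fun a => rfl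
  have hpres' : ∀ a : Matrix (Fin n) (Fin n) ℂ,
      (ρ * ∑ r, (V r)ᴴ * a * V r).trace = (ρ * a).trace := hpres
  have hadd : ∀ x y, Φ (x + y) = Φ x + Φ y := by
    intro x y
    simp [hΦ, Matrix.mul_add, Matrix.add_mul, Finset.sum_add_distrib]
  have hsmul : ∀ (z : ℂ) x, Φ (z • x) = z • Φ x := by
    intro z x
    simp [hΦ, Matrix.mul_smul, Matrix.smul_mul, Finset.smul_sum]
  have hzero : Φ 0 = 0 := by simp [hΦ]
  have hiadd : ∀ (l : ℕ) x y, Φ^[l] (x + y) = Φ^[l] x + Φ^[l] y := by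
    intro l
    induction l with
    | zero => simp
    | succ m ih =>
      intro x y
      simp only [Function.iterate_succ_apply', ih, hadd]
  have hismul : ∀ (l : ℕ) (z : ℂ) x, Φ^[l] (z • x) = z • Φ^[l] x := by
    intro l
    induction l with
    | zero => simp
    | succ m ih =>
      intro z x
      simp only [Function.iterate_succ_apply', ih, hsmul]
  have hone : Φ 1 = 1 := by
    rw [hΦ]
    simpa [Matrix.mul_one] using hV
  set cA : ℕ → Matrix (Fin n) (Fin n) ℂ → Matrix (Fin n) (Fin n) ℂ :=
    fun N a => (N : ℂ)⁻¹ • ∑ l ∈ Finset.range N, Φ^[l] a with hcA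
  have hE' : ∀ a i j, Tendsto (fun N => cA N a i j) atTop (nhds (E a i j)) := by
    intro a i j
    have := hE a i j
    simp only [hcA, Matrix.smul_apply, Matrix.sum_apply, smul_eq_mul]
    exact this
  have hUniq : ∀ {f : ℕ → Matrix (Fin n) (Fin n) ℂ} {X Y : Matrix (Fin n) (Fin n) ℂ},
      (∀ i j, Tendsto (fun N => f N i j) atTop (nhds (X i j))) →
      (∀ i j, Tendsto (fun N => f N i j) atTop (nhds (Y i j))) → X = Y := by
    intro f X Y h1 h2
    ext i j
    exact tendsto_nhds_unique (h1 i j) (h2 i j)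
  -- E fixes fixed points of Φ
  have hEfix : ∀ c, Φ c = c → E c = c := by
    intro c hc
    have hconst : ∀ i j, Tendsto (fun N => cA N c i j) atTop (nhds (c i j)) := by
      intro i j
      have heq : ∀ᶠ N in atTop, cA N c i j = c i j := by
        filter_upwards [eventually_ge_atTop 1] with N hN
        have hNc : ((N : ℕ) : ℂ) ≠ 0 := Nat.cast_ne_zero.mpr (by omega)
        simp only [hcA, Matrix.smul_apply, Matrix.sum_apply, smul_eq_mul,
          Function.iterate_fixed hc, Finset.sum_const, Finset.card_range, nsmul_eq_mul]
        rw [inv_mul_cancel_left₀ hNc]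
      exact Tendsto.congr' (EventuallyEq.symm heq) tendsto_const_nhds
    exact hUniq (hE' c) hconst
  -- ρ-preservation
  have hpres_iter : ∀ (l : ℕ) x, (ρ * Φ^[l] x).trace = (ρ * x).trace := by
    intro l
    induction l with
    | zero => simp
    | succ m ih =>
      intro x
      rw [Function.iterate_succ_apply', hpres (Φ^[m] x)]
      exact ih x
  have htrace : ∀ x, (ρ * E x).trace = (ρ * x).trace := by
    intro x
    have h1 : Tendsto (fun N => (ρ * cA N x).trace) atTop (nhds ((ρ * E x).trace)) :=
      CesaroAux.tendsto_trace_mul (hE' x) ρ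
    have h2 : ∀ᶠ N in atTop, (ρ * cA N x).trace = (ρ * x).trace := by
      filter_upwards [eventually_ge_atTop 1] with N hN
      have hNc : ((N : ℕ) : ℂ) ≠ 0 := Nat.cast_ne_zero.mpr (by omega)
      simp only [hcA, Matrix.mul_smul, Matrix.trace_smul, Finset.mul_sum, Matrix.trace_sum,
        smul_eq_mul]
      rw [Finset.sum_congr rfl fun l _ => by rw [hpres_iter l x], Finset.sum_const,
        Finset.card_range, nsmul_eq_mul, ← mul_assoc, mul_inv_cancel₀ hNc, one_mul]
    exact tendsto_nhds_unique h1 (Tendsto.congr' (EventuallyEq.symm h2) tendsto_const_nhds)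
  -- the error term goes to zero
  have hsmall : ∀ a (i j : Fin n),
      Tendsto (fun N : ℕ => (N : ℂ)⁻¹ * ((Φ^[N] a - a) i j)) atTop (nhds 0) := by
    intro a i j
    obtain ⟨K, hK⟩ := CesaroAux.iter_entry_bound V hV hpres' hρ a i j
    refine CesaroAux.tendsto_small (x := fun N => (Φ^[N] a - a) i j)
      (K := K + ‖a i j‖) fun N => ?_
    have h1 : ‖(Φ^[N] a) i j‖ ≤ K := hK N
    calc ‖(Φ^[N] a - a) i j‖ = ‖(Φ^[N] a) i j - a i j‖ := by rw [Matrix.sub_apply]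
      _ ≤ ‖(Φ^[N] a) i j‖ + ‖a i j‖ := norm_sub_le _ _
      _ ≤ K + ‖a i j‖ := by linarith
  have hsum_shift : ∀ a (N : ℕ), ∑ l ∈ Finset.range N, Φ^[l] (Φ a)
      = (∑ l ∈ Finset.range N, Φ^[l] a) + (Φ^[N] a - a) := by
    intro a N
    have h0 := Finset.sum_range_succ' (fun l => Φ^[l] a) N
    have h1 : ∑ l ∈ Finset.range N, Φ^[l] (Φ a)
        = ∑ l ∈ Finset.range N, Φ^[l + 1] a :=
      Finset.sum_congr rfl fun l _ => (Function.iterate_succ_apply Φ l a).symm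
    rw [h1]
    have h2 : (∑ l ∈ Finset.range N, Φ^[l + 1] a) + Φ^[0] a
        = (∑ l ∈ Finset.range N, Φ^[l] a) + Φ^[N] a := by
      rw [← h0, Finset.sum_range_succ]
    have h3 : Φ^[0] a = a := rfl
    rw [h3] at h2
    have := congrArg (fun X => X - a) h2
    simpa [add_sub_assoc] using this
  have hcAΦ : ∀ a (i j : Fin n),
      Tendsto (fun N => cA N (Φ a) i j) atTop (nhds (E a i j)) := by
    intro a i j
    have hrw : ∀ N : ℕ, cA N (Φ a) i j
        = cA N a i j + ((N : ℕ) : ℂ)⁻¹ * ((Φ^[N] a - a) i j) := by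
      intro N
      simp only [hcA, hsum_shift a N, Matrix.smul_apply, smul_eq_mul, Matrix.add_apply,
        mul_add]
    simp only [hrw]
    simpa using (hE' a i j).add (hsmall a i j)
  have hEΦ : ∀ a, E (Φ a) = E a := fun a => hUniq (hE' (Φ a)) (hcAΦ a)
  have hmapsum : ∀ (s : Finset ℕ) (f : ℕ → Matrix (Fin n) (Fin n) ℂ),
      Φ (∑ l ∈ s, f l) = ∑ l ∈ s, Φ (f l) := by
    intro s f
    induction s using Finset.induction_on with
    | empty => simpa using hzero
    | insert _ _ hnotmem ih => rename_i a s
                               rw [Finset.sum_insert hnotmem, hadd, ih, Finset.sum_insert hnotmem]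
  have hΦE : ∀ a, Φ (E a) = E a := by
    intro a
    have h1 : ∀ i j, Tendsto (fun N => Φ (cA N a) i j) atTop (nhds (Φ (E a) i j)) := by
      intro i j
      simp only [hΦ, Matrix.sum_apply]
      exact tendsto_finset_sum _ fun r _ => CesaroAux.tendsto_entry_mul (hE' a) _ _ i j
    have hΦcA : ∀ N, Φ (cA N a) = cA N (Φ a) := by
      intro N
      simp only [hcA]
      rw [hsmul, hmapsum]
      congr 1
      refine Finset.sum_congr rfl fun l _ => ?_
      rw [← Function.iterate_succ_apply' Φ l a, Function.iterate_succ_apply Φ l a]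
    have h2 : ∀ i j, Tendsto (fun N => Φ (cA N a) i j) atTop (nhds (E a i j)) := by
      intro i j
      simp only [hΦcA]
      exact hcAΦ a i j
    exact hUniq h1 h2
  have hEE : ∀ a, E (E a) = E a := fun a => hEfix _ (hΦE a)
  have hEadd : ∀ x y, E (x + y) = E x + E y := by
    intro x y
    refine hUniq (hE' (x + y)) ?_
    intro i j
    have hrw : ∀ N : ℕ, cA N (x + y) i j = cA N x i j + cA N y i j := by
      intro N
      simp only [hcA, hiadd, Finset.sum_add_distrib, Matrix.smul_apply, Matrix.add_apply,
        Matrix.sum_apply, smul_eq_mul]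
      ring
    simp only [hrw]
    have := (hE' x i j).add (hE' y i j)
    simpa [Matrix.add_apply] using this
  have hEsmul : ∀ (z : ℂ) x, E (z • x) = z • E x := by
    intro z x
    refine hUniq (hE' (z • x)) ?_
    intro i j
    have hrw : ∀ N : ℕ, cA N (z • x) i j = z * cA N x i j := by
      intro N
      simp only [hcA, hismul, Matrix.smul_apply, Matrix.sum_apply, Finset.mul_sum,
        smul_eq_mul, Finset.sum_mul]
      refine Finset.sum_congr rfl fun l _ => by ring
    simp only [hrw]
    have := (hE' x i j).const_mul z
    simpa [Matrix.smul_apply, smul_eq_mul] using this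
  have hEone : E 1 = 1 := hEfix 1 hone
  -- commutation of fixed points with the Kraus operators
  have hcomm : ∀ c, Φ c = c → ∀ r, c * V r = V r * c := fun c hc =>
    CesaroAux.fixed_commutes V hV hpres' hρ ((hΦ c).symm.trans hc)
  have hstar : ∀ c, Φ c = c → Φ cᴴ = cᴴ := by
    intro c hc
    rw [hΦ, CesaroAux.kraus_star, ← hΦ, hc]
  have hcommH : ∀ c, Φ c = c → ∀ r, c * (V r)ᴴ = (V r)ᴴ * c := by
    intro c hc r
    have h1 := hcomm cᴴ (hstar c hc) r
    calc c * (V r)ᴴ = (V r * cᴴ)ᴴ := by simp [Matrix.conjTranspose_mul]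
      _ = (cᴴ * V r)ᴴ := by rw [h1]
      _ = (V r)ᴴ * c := by simp [Matrix.conjTranspose_mul]
  have hbimod1 : ∀ c₁ c₂, Φ c₁ = c₁ → Φ c₂ = c₂ → ∀ x,
      Φ (c₁ * x * c₂) = c₁ * Φ x * c₂ := by
    intro c₁ c₂ h1 h2 x
    rw [hΦ, hΦ]
    calc ∑ r, (V r)ᴴ * (c₁ * x * c₂) * V r
        = ∑ r, c₁ * ((V r)ᴴ * x * V r) * c₂ := by
          refine Finset.sum_congr rfl fun r _ => ?_
          have e1 : (V r)ᴴ * c₁ = c₁ * (V r)ᴴ := (hcommH c₁ h1 r).symm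
          have e2 : c₂ * V r = V r * c₂ := hcomm c₂ h2 r
          calc (V r)ᴴ * (c₁ * x * c₂) * V r
              = ((V r)ᴴ * c₁) * x * (c₂ * V r) := by
                simp only [mul_assoc]
            _ = (c₁ * (V r)ᴴ) * x * (V r * c₂) := by rw [e1, e2]
            _ = c₁ * ((V r)ᴴ * x * V r) * c₂ := by simp only [mul_assoc]
      _ = c₁ * (∑ r, (V r)ᴴ * x * V r) * c₂ := by
          rw [Finset.mul_sum, Finset.sum_mul]
  have hbimod_iter : ∀ (l : ℕ) c₁ c₂, Φ c₁ = c₁ → Φ c₂ = c₂ → ∀ x,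
      Φ^[l] (c₁ * x * c₂) = c₁ * Φ^[l] x * c₂ := by
    intro l c₁ c₂ h1 h2
    induction l with
    | zero => intro x; simp
    | succ m ih =>
      intro x
      rw [Function.iterate_succ_apply', ih x, hbimod1 c₁ c₂ h1 h2,
        Function.iterate_succ_apply']
  have hEbimod : ∀ c₁ c₂, Φ c₁ = c₁ → Φ c₂ = c₂ → ∀ x,
      E (c₁ * x * c₂) = c₁ * E x * c₂ := by
    intro c₁ c₂ h1 h2 x
    refine hUniq (hE' (c₁ * x * c₂)) ?_
    intro i j
    have hrw : ∀ N : ℕ, cA N (c₁ * x * c₂) = c₁ * cA N x * c₂ := by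
      intro N
      simp only [hcA]
      rw [Finset.sum_congr rfl fun l _ => hbimod_iter l c₁ c₂ h1 h2 x]
      rw [show (∑ l ∈ Finset.range N, c₁ * Φ^[l] x * c₂)
            = c₁ * (∑ l ∈ Finset.range N, Φ^[l] x) * c₂ by
          rw [Finset.mul_sum, Finset.sum_mul],
        Matrix.mul_smul, Matrix.smul_mul]
    simp only [hrw]
    exact CesaroAux.tendsto_entry_mul (hE' x) c₁ c₂ i j
  -- complete positivity of E
  have hCP : IsCP E := by
    intro k' M hM
    set g : ℕ → Matrix (Fin n × Fin k') (Fin n × Fin k') ℂ :=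
      fun N => (N : ℂ)⁻¹ • ∑ l ∈ Finset.range N, CesaroAux.blockMap (Φ^[l]) M with hg
    have hblpsd : ∀ l : ℕ, (CesaroAux.blockMap (Φ^[l]) M).PosSemidef := by
      intro l
      induction l with
      | zero =>
        have h0 : CesaroAux.blockMap (Φ^[0]) M = M := by ext p q; rfl
        rw [h0]; exact hM
      | succ m ih =>
        have hstep : CesaroAux.blockMap (Φ^[m + 1]) M
            = CesaroAux.blockMap Φ (CesaroAux.blockMap (Φ^[m]) M) := by
          rw [← CesaroAux.blockMap_comp]
          ext p q
          simp only [CesaroAux.blockMap, Matrix.of_apply]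
          rw [Function.iterate_succ_apply']
        rw [hstep]
        exact CesaroAux.blockMap_kraus_psd V ih
    have hgpsd : ∀ N, (g N).PosSemidef := fun N =>
      CesaroAux.posSemidef_smul_inv_nat N
        (Finset.sum_induction _ _ (fun A B hA hB => hA.add hB) Matrix.PosSemidef.zero
          fun l _ => hblpsd l)
    refine CesaroAux.posSemidef_of_tendsto hgpsd ?_
    intro p q
    have hgq : ∀ N, g N p q = cA N (Matrix.of fun i j => M (i, p.2) (j, q.2)) p.1 q.1 := by
      intro N
      simp [hg, hcA, CesaroAux.blockMap, Matrix.smul_apply, Matrix.sum_apply]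
    simp only [hgq]
    exact hE' _ p.1 q.1
  -- the fixed-point star subalgebra
  have hmulmem : ∀ a b, Φ a = a → Φ b = b → Φ (a * b) = a * b := by
    intro a b ha hb
    rw [hΦ]
    calc ∑ r, (V r)ᴴ * (a * b) * V r = ∑ r, ((V r)ᴴ * a * V r) * b := by
          refine Finset.sum_congr rfl fun r _ => ?_
          rw [show (V r)ᴴ * (a * b) * V r = (V r)ᴴ * a * (b * V r) by
              simp only [mul_assoc], hcomm b hb r]
          simp only [mul_assoc]
      _ = (∑ r, (V r)ᴴ * a * V r) * b := by rw [Finset.sum_mul]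
      _ = a * b := by rw [← hΦ, ha]
  refine ⟨⟨hEadd, hEsmul, hEone, hCP, fun x => hΦE x, fun c hc => hEfix c hc,
      fun c₁ h1 c₂ h2 x => hEbimod c₁ c₂ h1 h2 x⟩,
    htrace, hΦE, hEΦ, hEE,
    ⟨{ carrier := {c | Φ c = c},
       mul_mem' := fun {a b} ha hb => hmulmem a b ha hb,
       one_mem' := hone,
       add_mem' := fun {a b} ha hb => by
         show Φ (a + b) = a + b
         rw [hadd, ha, hb],
       zero_mem' := hzero,
       algebraMap_mem' := fun z => by
         show Φ (algebraMap ℂ (Matrix (Fin n) (Fin n) ℂ) z)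
           = algebraMap ℂ (Matrix (Fin n) (Fin n) ℂ) z
         rw [Algebra.algebraMap_eq_smul_one, hsmul, hone],
       star_mem' := fun {a} ha => by
         show Φ (star a) = star a
         rw [Matrix.star_eq_conjTranspose]
         exact hstar a ha }, rfl⟩⟩
end
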